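/- arXiv:1906.03296 — 3 statements merged into one kernel-verified Lean document; each statement's English description precedes it below -/
import Mathlib

section
/- Let b be a Baer subline of ℓ∞ in PG(2,q²) and let P̄, Q̄ ∈ ℓ∞ be conjugate with respect to b. Let P, Q be the points of the transversal g corresponding to P̄, Q̄. Then in PG(4,q²) the lines PQ^q and P^qQ each meet every line of PG(4,q²) that meets all of the q+1 extended spread lines [T]⋆ for T̄ ∈ b; that is, PQ^q and P^qQ are lines of the extended regulus determined by {[T] : T̄ ∈ b}. -/
open scoped Classical
open Matrix

noncomputable section

namespace BaerConics

/-- Points of the projective space `PG(n-1, K)` as projectivization of `Fin n → K`. -/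
abbrev PP (K : Type) [Field K] (n : ℕ) : Type := Projectivization K (Fin n → K)

variable {K : Type} [Field K] {m n : ℕ}

/-- The (at most one) projective point determined by a vector:  empty if `v = 0`,
and the singleton `{[v]}` otherwise. -/
def projPt (v : Fin n → K) : Set (PP K n) :=
  {p | ∃ h : v ≠ 0, p = Projectivization.mk K v h}

/-- The set of projective points lying in a linear subspace. -/
def ptsOf (W : Submodule K (Fin n → K)) : Set (PP K n) :=
  {p | p.rep ∈ W}

/-- The projective line through two points (as the set of points of the span). -/
def lineTh (P Q : PP K n) : Set (PP K n) :=
  ptsOf (Submodule.span K {P.rep, Q.rep})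

/-- `X` is a projective flat of projective dimension `d`. -/
def IsFlat (d : ℕ) (X : Set (PP K n)) : Prop :=
  ∃ W : Submodule K (Fin n → K), Module.finrank K W = d + 1 ∧ X = ptsOf W

/-- Image of a set of vectors under the projective map induced by a matrix. -/
def mimg (M : Matrix (Fin m) (Fin n) K) (X : Set (Fin n → K)) : Set (PP K m) :=
  {p | ∃ v ∈ X, p ∈ projPt (M.mulVec v)}

/-- Coordinatewise application of a ring homomorphism to a vector. -/
def mapVec {L : Type} [Field L] (σ : K →+* L) (v : Fin n → K) : Fin n → L :=
  fun i => σ (v i)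

lemma mulVec_inj (M : Matrix (Fin n) (Fin n) K) (hM : IsUnit M.det) :
    Function.Injective M.mulVec := by
  intro a b hab
  have h := congrArg (fun v => M⁻¹.mulVec v) hab
  simpa [Matrix.mulVec_mulVec, Matrix.nonsing_inv_mul M hM] using h

/-- The projective transformation induced by an invertible matrix. -/
def pmap (M : Matrix (Fin n) (Fin n) K) (hM : IsUnit M.det) (p : PP K n) : PP K n :=
  Projectivization.mk K (M.mulVec p.rep) (by
    intro h
    apply p.rep_nonzero
    have h0 : M.mulVec p.rep = M.mulVec 0 := by simpa [Matrix.mulVec_zero] using h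
    exact mulVec_inj M hM h0)

/-- The map induced on projective points by the coordinatewise `q`-power map. -/
def frobPt (q : ℕ) (p : PP K n) : PP K n :=
  Projectivization.mk K (fun i => p.rep i ^ q) (by
    obtain ⟨i, hi⟩ := Function.ne_iff.mp p.rep_nonzero
    intro h
    exact pow_ne_zero q (by simpa using hi) (by simpa using congrFun h i))

/-- The line at infinity `z = 0` of `PG(2, K)`. -/
def linf (K : Type) [Field K] : Set (PP K 3) := {p | p.rep 2 = 0}

/-- Coordinatewise application of the algebra map to a vector. -/
def algVec (F : Type) {K : Type} [Field F] [Field K] [Algebra F K] {n : ℕ}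
    (v : Fin n → F) : Fin n → K := fun i => algebraMap F K (v i)

/-- Vectors representing the points of the standard Baer subline of `ℓ∞`. -/
def sublineVecs (F K : Type) [Field F] [Field K] [Algebra F K] : Set (Fin 3 → K) :=
  {v | ∃ θ : F, v = ![algebraMap F K θ, 1, 0]} ∪ {![1, 0, 0]}

/-- Nonzero vectors representing the points of `ℓ∞`. -/
def linfVecs (K : Type) [Field K] : Set (Fin 3 → K) := {v | v ≠ 0 ∧ v 2 = 0}

/-- Vectors with all coordinates in (the image of) `F`, representing the canonical
Baer subplane. -/
def subplaneVecs (F K : Type) [Field F] [Field K] [Algebra F K] : Set (Fin 3 → K) :=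
  {v | ∃ w : Fin 3 → F, w ≠ 0 ∧ v = algVec F w}

/-- Vectors of the standard conic with parameters in `S`. -/
def conicVecs {K : Type} [Field K] (S : Set K) : Set (Fin 3 → K) :=
  {v | ∃ θ ∈ S, v = ![1, θ, θ ^ 2]} ∪ {![0, 0, 1]}

/-- `b` is a Baer subline of the line `ℓ` of `PG(2,q²)`. -/
def IsBaerSublineOf (F : Type) {K : Type} [Field F] [Field K] [Algebra F K]
    (b ℓ : Set (PP K 3)) : Prop :=
  ∃ M : Matrix (Fin 3) (Fin 3) K, IsUnit M.det ∧
    ℓ = mimg M (linfVecs K) ∧ b = mimg M (sublineVecs F K)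

/-- `B` is a Baer subplane of `PG(2,q²)`. -/
def IsBaerSubplane (F : Type) {K : Type} [Field F] [Field K] [Algebra F K]
    (B : Set (PP K 3)) : Prop :=
  ∃ M : Matrix (Fin 3) (Fin 3) K, IsUnit M.det ∧ B = mimg M (subplaneVecs F K)

/-- `C` is the image under `PGL(3,K)` of the standard conic with parameters in `S`. -/
def IsConicOver {K : Type} [Field K] (S : Set K) (C : Set (PP K 3)) : Prop :=
  ∃ M : Matrix (Fin 3) (Fin 3) K, IsUnit M.det ∧ C = mimg M (conicVecs S)

/-- An `F_q`-conic of `PG(2,q²)`: a nondegenerate conic of a Baer subplane. -/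
def IsFqConic (F : Type) {K : Type} [Field F] [Field K] [Algebra F K]
    (C : Set (PP K 3)) : Prop :=
  IsConicOver (Set.range (algebraMap F K)) C

/-- An `F_{q²}`-conic of `PG(2,q²)`: a nondegenerate conic. -/
def IsFq2Conic {K : Type} [Field K] (C : Set (PP K 3)) : Prop :=
  IsConicOver (Set.univ : Set K) C

/-- `𝒦` is an `ℓ∞`-Baer pencil with vertex `P`. -/
def IsLinfBaerPencil (F : Type) {K : Type} [Field F] [Field K] [Algebra F K]
    (𝒦 : Set (PP K 3)) (P : PP K 3) : Prop :=
  P ∈ linf K ∧ ∃ ℓ b : Set (PP K 3), IsBaerSublineOf F b ℓ ∧ P ∉ ℓ ∧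
    (∃! X, X ∈ b ∩ linf K) ∧ 𝒦 = ⋃ X ∈ b, lineTh P X

/-- `m` is a line of the Baer subplane `B`, with extension (full line) `ℓ`. -/
def IsLineOfExt {K : Type} [Field K] (q : ℕ) (B m ℓ : Set (PP K 3)) : Prop :=
  IsFlat 1 ℓ ∧ m = B ∩ ℓ ∧ m.ncard = q + 1

/-- `m` is a line of the Baer subplane `B`. -/
def IsLineOf {K : Type} [Field K] (q : ℕ) (B m : Set (PP K 3)) : Prop :=
  ∃ ℓ, IsLineOfExt q B m ℓ

/-- `P` and `Q` are conjugate with respect to the Baer subline `b` of `ℓ∞`. -/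
def ConjWrtSubline (F : Type) {K : Type} [Field F] [Field K] [Algebra F K]
    (q : ℕ) (b : Set (PP K 3)) (P Q : PP K 3) : Prop :=
  ∃ (M : Matrix (Fin 3) (Fin 3) K) (hM : IsUnit M.det),
    mimg M (linfVecs K) = linf K ∧ b = mimg M (sublineVecs F K) ∧
    ∃ P₀ : PP K 3, P = pmap M hM P₀ ∧ Q = pmap M hM (frobPt q P₀)

/-- A representative vector for the point `(δ,1,0)` (resp. `(1,0,0)`) of `ℓ∞`. -/
def ptInfVec {K : Type} [Field K] : Option K → Fin 3 → K
  | some δ => ![δ, 1, 0]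
  | none => ![1, 0, 0]

lemma ptInfVec_ne {K : Type} [Field K] (t : Option K) : ptInfVec t ≠ 0 := by
  cases t with
  | none => intro h; have h0 := congrFun h 0; simp [ptInfVec] at h0
  | some δ => intro h; have h0 := congrFun h 1; simp [ptInfVec] at h0

/-- The point of `ℓ∞` with parameter `δ ∈ K ∪ {∞}`. -/
def ptInf {K : Type} [Field K] (t : Option K) : PP K 3 :=
  Projectivization.mk K (ptInfVec t) (ptInfVec_ne t)

/-- The hyperplane at infinity `z = 0` of `PG(4, F)`. -/
def sinf (F : Type) [Field F] : Set (PP F 5) := {p | p.rep 4 = 0}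

/-- Affine coordinates of the Bruck-Bose image of an affine point of `PG(2,q²)`. -/
def bbVec {F K : Type} [Field F] [Field K] (c0 c1 : K → F) (p : PP K 3) : Fin 5 → F :=
  ![c0 (p.rep 0 / p.rep 2), c1 (p.rep 0 / p.rep 2),
    c0 (p.rep 1 / p.rep 2), c1 (p.rep 1 / p.rep 2), 1]

/-- The Bruck-Bose map (meaningful on affine points of `PG(2,q²)`). -/
def bb {F K : Type} [Field F] [Field K] (c0 c1 : K → F) (p : PP K 3) : PP F 5 :=
  Projectivization.mk F (bbVec c0 c1 p) (by
    intro h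
    have h4 := congrFun h 4
    simp [bbVec] at h4)

/-- First spanning vector of the spread line with parameter `δ ∈ K ∪ {∞}`. -/
def spreadV1 {F K : Type} [Field F] [Field K] (c0 c1 : K → F) : Option K → Fin 5 → F
  | some δ => ![c0 δ, c1 δ, 1, 0, 0]
  | none => ![1, 0, 0, 0, 0]

/-- Second spanning vector of the spread line with parameter `δ ∈ K ∪ {∞}`. -/
def spreadV2 {F K : Type} [Field F] [Field K] (c0 c1 : K → F) (t0 t1 : F) :
    Option K → Fin 5 → F
  | some δ => ![t0 * c1 δ, c0 δ + t1 * c1 δ, 0, 1, 0]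
  | none => ![0, 1, 0, 0, 0]

/-- The line of the regular spread `S` with parameter `δ ∈ K ∪ {∞}`. -/
def spreadLine {F K : Type} [Field F] [Field K] (c0 c1 : K → F) (t0 t1 : F)
    (t : Option K) : Set (PP F 5) :=
  ptsOf (Submodule.span F {spreadV1 c0 c1 t, spreadV2 c0 c1 t0 t1 t})

/-- The extension `[T]⋆` of a spread line to `PG(4,q²)`. -/
def extSpreadLine (F : Type) {K : Type} [Field F] [Field K] [Algebra F K]
    (c0 c1 : K → F) (t0 t1 : F) (t : Option K) : Set (PP K 5) :=
  ptsOf (Submodule.span K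
    {algVec F (spreadV1 c0 c1 t), algVec F (spreadV2 c0 c1 t0 t1 t)})

/-- The `K`-extension of an `F`-subspace. -/
def extSub (F : Type) {K : Type} [Field F] [Field K] [Algebra F K] {n : ℕ}
    (W : Submodule F (Fin n → F)) : Submodule K (Fin n → K) :=
  Submodule.span K (algVec F '' (W : Set (Fin n → F)))

def A0v {K : Type} [Field K] (τ : K) (q : ℕ) : Fin 5 → K := ![τ ^ q, -1, 0, 0, 0]
def A1v {K : Type} [Field K] (τ : K) (q : ℕ) : Fin 5 → K := ![0, 0, τ ^ q, -1, 0]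
def B0v {K : Type} [Field K] (τ : K) : Fin 5 → K := ![τ, -1, 0, 0, 0]
def B1v {K : Type} [Field K] (τ : K) : Fin 5 → K := ![0, 0, τ, -1, 0]

/-- The transversal line `g` of the regular spread, in `PG(4,q²)`. -/
def gline {K : Type} [Field K] (τ : K) (q : ℕ) : Set (PP K 5) :=
  ptsOf (Submodule.span K {A0v τ q, A1v τ q})

/-- The conjugate transversal line `g^q` of the regular spread, in `PG(4,q²)`. -/
def gqline {K : Type} [Field K] (τ : K) : Set (PP K 5) :=
  ptsOf (Submodule.span K {B0v τ, B1v τ})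

/-- Representative vector of the point `T = δA₀ + A₁` of `g`. -/
def gptVec {K : Type} [Field K] (τ : K) (q : ℕ) : Option K → Fin 5 → K
  | some δ => δ • A0v τ q + A1v τ q
  | none => A0v τ q

/-- Representative vector of the conjugate point `T^q = δ^q A₀^q + A₁^q` of `g^q`. -/
def gqptVec {K : Type} [Field K] (τ : K) (q : ℕ) : Option K → Fin 5 → K
  | some δ => δ ^ q • B0v τ + B1v τ
  | none => B0v τ

lemma gptVec_ne {K : Type} [Field K] (τ : K) (q : ℕ) (t : Option K) :
    gptVec τ q t ≠ 0 := by
  cases t with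
  | none =>
      intro h
      have := congrFun h 1
      simp [gptVec, A0v] at this
  | some δ =>
      intro h
      have := congrFun h 3
      simp [gptVec, A0v, A1v] at this

lemma gqptVec_ne {K : Type} [Field K] (τ : K) (q : ℕ) (t : Option K) :
    gqptVec τ q t ≠ 0 := by
  cases t with
  | none =>
      intro h
      have := congrFun h 1
      simp [gqptVec, B0v] at this
  | some δ =>
      intro h
      have := congrFun h 3
      simp [gqptVec, B0v, B1v] at this

/-- The point of `g` corresponding to the point of `ℓ∞` with parameter `δ ∈ K ∪ {∞}`. -/
def gpt {K : Type} [Field K] (τ : K) (q : ℕ) (t : Option K) : PP K 5 :=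
  Projectivization.mk K (gptVec τ q t) (gptVec_ne τ q t)

/-- The point of `g^q` conjugate to `gpt τ q t`. -/
def gqpt {K : Type} [Field K] (τ : K) (q : ℕ) (t : Option K) : PP K 5 :=
  Projectivization.mk K (gqptVec τ q t) (gqptVec_ne τ q t)

/-- Evaluation of the quadratic form with matrix `M` at `v`. -/
def qeval {K : Type} [Field K] {n : ℕ} (M : Matrix (Fin n) (Fin n) K) (v : Fin n → K) : K :=
  v ⬝ᵥ M.mulVec v

/-- Vectors of the standard twisted cubic (inside the hyperplane `x₄ = 0`)
with parameters in `S`. -/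
def tcVecs {K : Type} [Field K] (S : Set K) : Set (Fin 5 → K) :=
  {v | ∃ θ ∈ S, v = ![1, θ, θ ^ 2, θ ^ 3, 0]} ∪ {![0, 0, 0, 1, 0]}

/-- Vectors of the standard 4-dimensional normal rational curve with parameters in `S`. -/
def nrcVecs {K : Type} [Field K] (S : Set K) : Set (Fin 5 → K) :=
  {v | ∃ θ ∈ S, v = ![1, θ, θ ^ 2, θ ^ 3, θ ^ 4]} ∪ {![0, 0, 0, 0, 1]}

/-- `R` is a regulus of `Σ∞` in `PG(4,q)`. -/
def IsRegulus {F : Type} [Field F] (q : ℕ) (R : Set (Set (PP F 5))) : Prop :=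
  R.ncard = q + 1 ∧
  (∀ ℓ ∈ R, IsFlat 1 ℓ ∧ ℓ ⊆ sinf F) ∧
  (∀ ℓ ∈ R, ∀ ℓ' ∈ R, ℓ ≠ ℓ' → ℓ ∩ ℓ' = ∅) ∧
  (∀ mℓ : Set (PP F 5), IsFlat 1 mℓ → mℓ ⊆ sinf F →
    (∃ ℓ₁ ∈ R, ∃ ℓ₂ ∈ R, ∃ ℓ₃ ∈ R, ℓ₁ ≠ ℓ₂ ∧ ℓ₁ ≠ ℓ₃ ∧ ℓ₂ ≠ ℓ₃ ∧
      (mℓ ∩ ℓ₁).Nonempty ∧ (mℓ ∩ ℓ₂).Nonempty ∧ (mℓ ∩ ℓ₃).Nonempty) →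
    ∀ ℓ ∈ R, (mℓ ∩ ℓ).Nonempty)



set_option linter.dupNamespace false
variable {K : Type} [Field K] {n : ℕ}

lemma rep_eq_smul (v : Fin n → K) (h : v ≠ 0) :
    ∃ c : K, c ≠ 0 ∧ (Projectivization.mk K v h).rep = c • v := by
  have h1 := Projectivization.mk_rep (Projectivization.mk K v h)
  rw [Projectivization.mk_eq_mk_iff] at h1
  obtain ⟨a, ha⟩ := h1
  exact ⟨(a : K), a.ne_zero, ha.symm⟩

lemma mk_eq_of_smul (v w : Fin n → K) (hv : v ≠ 0) (hw : w ≠ 0) (c : K) (hc : c ≠ 0)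
    (h : v = c • w) : Projectivization.mk K v hv = Projectivization.mk K w hw := by
  rw [Projectivization.mk_eq_mk_iff]
  exact ⟨Units.mk0 c hc, h.symm⟩

/-- The coordinate extraction (g-coordinates w.r.t. parameter `τ`). -/
def ycc (τ : K) (w : Fin 5 → K) : Fin 2 → K := ![w 0 + τ * w 1, w 2 + τ * w 3]

lemma ycc_comb (τ : K) (a b : K) (u v : Fin 5 → K) :
    ycc τ (a • u + b • v) = a • ycc τ u + b • ycc τ v := by
  funext i; fin_cases i <;> simp [ycc] <;> ring

lemma ycc_recon {τ τ' : K} (hne : τ' ≠ τ) (w w' : Fin 5 → K)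
    (h1 : ycc τ w = ycc τ w') (h2 : ycc τ' w = ycc τ' w') (h4 : w 4 = w' 4) : w = w' := by
  have e10 := congrFun h1 0
  have e11 := congrFun h1 1
  have e20 := congrFun h2 0
  have e21 := congrFun h2 1
  simp [ycc] at e10 e11 e20 e21
  have hs : τ' - τ ≠ 0 := sub_ne_zero.mpr hne
  have hw1 : w 1 = w' 1 := by
    have : (τ' - τ) * w 1 = (τ' - τ) * w' 1 := by linear_combination e20 - e10
    exact mul_left_cancel₀ hs this
  have hw3 : w 3 = w' 3 := by
    have : (τ' - τ) * w 3 = (τ' - τ) * w' 3 := by linear_combination e21 - e11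
    exact mul_left_cancel₀ hs this
  have hw0 : w 0 = w' 0 := by linear_combination e10 - τ * hw1
  have hw2 : w 2 = w' 2 := by linear_combination e11 - τ * hw3
  funext i; fin_cases i <;> assumption

/-- parameter vector in `K²` of a point of `ℓ∞`. -/
def pvec : Option K → Fin 2 → K
  | some δ => ![δ, 1]
  | none => ![1, 0]

lemma pvec_ne (t : Option K) : pvec t ≠ 0 := by
  cases t with
  | none => intro h; have := congrFun h 0; simp [pvec] at this
  | some δ => intro h; have := congrFun h 1; simp [pvec] at this

lemma ptInfVec_eq (t : Option K) : ptInfVec t = ![pvec t 0, pvec t 1, 0] := by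
  cases t <;> (funext i; fin_cases i <;> rfl)

/-- coordinatewise `q`-th power. -/
def frob2 (q : ℕ) (x : Fin 2 → K) : Fin 2 → K := fun i => x i ^ q

lemma frob2_smul (q : ℕ) (c : K) (x : Fin 2 → K) :
    frob2 q (c • x) = c ^ q • frob2 q x := by
  funext i; simp [frob2, mul_pow]

lemma frob2_mulVec {q : ℕ} (hadd : ∀ x y : K, (x + y) ^ q = x ^ q + y ^ q)
    (N : Matrix (Fin 2) (Fin 2) K) (x : Fin 2 → K) :
    frob2 q (N.mulVec x) = (N.map (· ^ q)).mulVec (frob2 q x) := by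
  funext i
  simp [frob2, Matrix.mulVec, dotProduct, Fin.sum_univ_two, hadd, mul_pow, Matrix.map_apply]

lemma ycc_gptVec (τ : K) (q : ℕ) (t : Option K) :
    ycc τ (gptVec τ q t) = (τ ^ q - τ) • pvec t := by
  cases t <;> (funext i; fin_cases i <;> (simp [ycc, gptVec, A0v, A1v, pvec] <;> ring))

lemma ycc_gptVec' (τ : K) (q : ℕ) (t : Option K) :
    ycc (τ ^ q) (gptVec τ q t) = 0 := by
  cases t <;> (funext i; fin_cases i <;> (simp [ycc, gptVec, A0v, A1v] <;> ring))

lemma ycc_gqptVec (τ : K) (q : ℕ) (t : Option K) :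
    ycc τ (gqptVec τ q t) = 0 := by
  cases t <;> (funext i; fin_cases i <;> (simp [ycc, gqptVec, B0v, B1v] <;> ring))

lemma ycc_gqptVec' (τ : K) {q : ℕ} (hq0 : q ≠ 0) (t : Option K) :
    ycc (τ ^ q) (gqptVec τ q t) = (τ - τ ^ q) • frob2 q (pvec t) := by
  cases t <;> (funext i; fin_cases i <;>
    (simp [ycc, gqptVec, B0v, B1v, pvec, frob2, zero_pow hq0] <;> ring))

lemma gptVec4 (τ : K) (q : ℕ) (t : Option K) : gptVec τ q t 4 = 0 := by
  cases t <;> simp [gptVec, A0v, A1v]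

lemma gqptVec4 (τ : K) (q : ℕ) (t : Option K) : gqptVec τ q t 4 = 0 := by
  cases t <;> simp [gqptVec, B0v, B1v]

lemma mem_gspan {τ : K} {q : ℕ} (hne : τ ^ q ≠ τ) (hq0 : q ≠ 0) (t t' : Option K)
    (w : Fin 5 → K) (σ θ : K)
    (h1 : ycc τ w = σ • pvec t) (h2 : ycc (τ ^ q) w = θ • frob2 q (pvec t'))
    (h4 : w 4 = 0) :
    w ∈ Submodule.span K {gptVec τ q t, gqptVec τ q t'} := by
  rw [Submodule.mem_span_pair]
  refine ⟨σ / (τ ^ q - τ), θ / (τ - τ ^ q), ?_⟩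
  have hs : τ ^ q - τ ≠ 0 := sub_ne_zero.mpr hne
  have hs' : τ - τ ^ q ≠ 0 := sub_ne_zero.mpr hne.symm
  refine (ycc_recon hne _ _ ?_ ?_ ?_).symm
  · rw [ycc_comb, ycc_gptVec, ycc_gqptVec, h1, smul_zero, add_zero, smul_smul,
      div_mul_cancel₀ _ hs]
  · rw [ycc_comb, ycc_gptVec', ycc_gqptVec' τ hq0, h2, smul_zero, zero_add, smul_smul,
      div_mul_cancel₀ _ hs']
  · simp [gptVec4, gqptVec4, h4]

lemma smul_eq_smul_of {ξ ξ' : Fin 2 → K} (hD : ξ 0 * ξ' 1 - ξ 1 * ξ' 0 ≠ 0)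
    {s s' : K} (h : s • ξ = s' • ξ') : s = 0 ∧ s' = 0 := by
  have h0 := congrFun h 0
  have h1 := congrFun h 1
  simp [Pi.smul_apply, smul_eq_mul] at h0 h1
  constructor
  · have : s * (ξ 0 * ξ' 1 - ξ 1 * ξ' 0) = 0 := by linear_combination ξ' 1 * h0 - ξ' 0 * h1
    exact (mul_eq_zero.mp this).resolve_right hD
  · have : s' * (ξ 0 * ξ' 1 - ξ 1 * ξ' 0) = 0 := by linear_combination ξ 1 * h0 - ξ 0 * h1
    exact (mul_eq_zero.mp this).resolve_right hD


lemma ycc_spread {F : Type} [Field F] [Algebra F K] (τ : K) {q : ℕ} (hq0 : q ≠ 0)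
    (t0 t1 : F) (c0 c1 : K → F)
    (hτ : τ ^ 2 = algebraMap F K t1 * τ + algebraMap F K t0)
    (hτq : (τ ^ q) ^ 2 = algebraMap F K t1 * τ ^ q + algebraMap F K t0)
    (hc : ∀ x : K, x = algebraMap F K (c0 x) + algebraMap F K (c1 x) * τ)
    (hcq : ∀ x : K, x ^ q = algebraMap F K (c0 x) + algebraMap F K (c1 x) * τ ^ q)
    (t : Option K) (α β : K) :
    ycc τ (α • algVec F (spreadV1 c0 c1 t) + β • algVec F (spreadV2 c0 c1 t0 t1 t))
        = (α + β * τ) • pvec t ∧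
    ycc (τ ^ q) (α • algVec F (spreadV1 c0 c1 t) + β • algVec F (spreadV2 c0 c1 t0 t1 t))
        = (α + β * τ ^ q) • frob2 q (pvec t) ∧
    ((α • algVec F (spreadV1 c0 c1 t) + β • algVec F (spreadV2 c0 c1 t0 t1 t) : Fin 5 → K)) 4
        = 0 := by
  cases t with
  | none =>
      refine ⟨?_, ?_, ?_⟩
      · funext i; fin_cases i <;>
          (simp [ycc, algVec, spreadV1, spreadV2, pvec] <;> ring)
      · funext i; fin_cases i <;>
          (simp [ycc, algVec, spreadV1, spreadV2, pvec, frob2, zero_pow hq0] <;> ring)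
      · simp [algVec, spreadV1, spreadV2]
  | some δ =>
      refine ⟨?_, ?_, ?_⟩
      · funext i; fin_cases i
        · simp [ycc, algVec, spreadV1, spreadV2, pvec, _root_.map_mul, _root_.map_add]
          linear_combination (-(α + β * τ)) * (hc δ) - β * algebraMap F K (c1 δ) * hτ
        · simp [ycc, algVec, spreadV1, spreadV2, pvec]; ring
      · funext i; fin_cases i
        · simp [ycc, algVec, spreadV1, spreadV2, pvec, frob2, _root_.map_mul, _root_.map_add]
          linear_combination (-(α + β * τ ^ q)) * (hcq δ) - β * algebraMap F K (c1 δ) * hτq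
        · simp [ycc, algVec, spreadV1, spreadV2, pvec, frob2]; ring
      · simp [algVec, spreadV1, spreadV2]

lemma frob_facts (F : Type) (K : Type) [Field F] [Field K] [Fintype F] [Fintype K]
    [Algebra F K] (q : ℕ) (hq : Fintype.card F = q) (hK : Fintype.card K = q ^ 2) :
    (∀ x y : K, (x + y) ^ q = x ^ q + y ^ q) ∧
    (∀ a : F, (algebraMap F K a) ^ q = algebraMap F K a) ∧
    (∀ x : K, (x ^ q) ^ q = x) ∧ 2 ≤ q := by
  have h2 : 2 ≤ q := by
    rw [← hq]; exact Fintype.one_lt_card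
  set p := ringChar F with hp'
  haveI : CharP F p := ringChar.charP F
  haveI : CharP K p := charP_of_injective_ringHom (algebraMap F K).injective p
  obtain ⟨n, hp, hcard⟩ := FiniteField.card F p
  haveI : Fact p.Prime := ⟨hp⟩
  have hq' : q = p ^ (n : ℕ) := by rw [← hq, hcard]
  refine ⟨?_, ?_, ?_, h2⟩
  · intro x y; rw [hq']; exact add_pow_char_pow x y p n
  · intro a
    rw [← map_pow]
    congr 1
    rw [← hq]; exact FiniteField.pow_card a
  · intro x
    rw [← pow_mul, ← pow_two, ← hK]
    exact FiniteField.pow_card x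

lemma tau_pow_ne {F : Type} [Field F] [Fintype F] [Algebra F K] {τ : K} {q : ℕ}
    (hq : Fintype.card F = q) (h2 : 2 ≤ q)
    (hfix : ∀ a : F, (algebraMap F K a) ^ q = algebraMap F K a)
    (hτF : τ ∉ Set.range (algebraMap F K)) : τ ^ q ≠ τ := by
  intro hτq
  classical
  set f : Polynomial K := Polynomial.X ^ q - Polynomial.X with hf'
  have hf : f ≠ 0 := by
    intro h0
    have hcoeff : f.coeff q = 1 := by
      simp [hf', Polynomial.coeff_X_pow, Polynomial.coeff_X]
      omega
    rw [h0] at hcoeff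
    simp at hcoeff
  have hdeg : f.natDegree ≤ q := by
    refine le_trans (Polynomial.natDegree_sub_le _ _) ?_
    simp [Polynomial.natDegree_X_pow, Polynomial.natDegree_X]
    omega
  set s : Finset K := insert τ (Finset.univ.image (algebraMap F K)) with hs'
  have hτmem : τ ∉ Finset.univ.image (algebraMap F K) := by
    intro h
    obtain ⟨a, -, ha⟩ := Finset.mem_image.mp h
    exact hτF ⟨a, ha⟩
  have hcards : s.card = q + 1 := by
    rw [hs', Finset.card_insert_of_notMem hτmem,
      Finset.card_image_of_injective _ (algebraMap F K).injective, Finset.card_univ, hq]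
  have hsub : s ⊆ f.roots.toFinset := by
    intro x hx
    rw [Multiset.mem_toFinset, Polynomial.mem_roots hf]
    have hroot : x ^ q = x := by
      rcases Finset.mem_insert.mp hx with h | h
      · rw [h]; exact hτq
      · obtain ⟨a, -, ha⟩ := Finset.mem_image.mp h
        rw [← ha]; exact hfix a
    simp [hf', Polynomial.IsRoot, hroot]
  have := (Finset.card_le_card hsub).trans
    ((Multiset.toFinset_card_le _).trans ((Polynomial.card_roots' f).trans hdeg))
  omega

lemma core {W : Submodule K (Fin 5 → K)} (hW : Module.finrank K W = 2)
    (Y Z : (Fin 5 → K) → Fin 2 → K)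
    (hYlin : ∀ (a b : K) (u v : Fin 5 → K), Y (a • u + b • v) = a • Y u + b • Y v)
    (hZlin : ∀ (a b : K) (u v : Fin 5 → K), Z (a • u + b • v) = a • Z u + b • Z v)
    (va vb vc : Fin 5 → K) (ξa ξb ξc x : Fin 2 → K)
    (sa ta sb tb sc tc : K)
    (hinj : ∀ r s : K, Y (r • va + s • vb) = 0 → Z (r • va + s • vb) = 0 →
      r • va + s • vb = 0)
    (hva : va ≠ 0) (hvb : vb ≠ 0) (hvc : vc ≠ 0)
    (hvaW : va ∈ W) (hvbW : vb ∈ W) (hvcW : vc ∈ W)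
    (hYa : Y va = sa • ξa) (hZa : Z va = ta • ξa)
    (hYb : Y vb = sb • ξb) (hZb : Z vb = tb • ξb)
    (hYc : Y vc = sc • ξc) (hZc : Z vc = tc • ξc)
    (hDab : ξa 0 * ξb 1 - ξa 1 * ξb 0 ≠ 0)
    (hDac : ξa 0 * ξc 1 - ξa 1 * ξc 0 ≠ 0)
    (hDbc : ξb 0 * ξc 1 - ξb 1 * ξc 0 ≠ 0)
    (a b : K) (hab : ¬(a = 0 ∧ b = 0)) (hxx : x = a • ξa + b • ξb) :
    ∃ r s : K, r • va + s • vb ≠ 0 ∧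
      ∃ σ θ : K, Y (r • va + s • vb) = σ • x ∧ Z (r • va + s • vb) = θ • x := by
  have hYs : ∀ (c : K) (u : Fin 5 → K), Y (c • u) = c • Y u := by
    intro c u; have := hYlin c 0 u u; simpa using this
  have hZs : ∀ (c : K) (u : Fin 5 → K), Z (c • u) = c • Z u := by
    intro c u; have := hZlin c 0 u u; simpa using this
  have hY0 : Y 0 = 0 := by have := hYs 0 0; simpa using this
  have hZ0 : Z 0 = 0 := by have := hZs 0 0; simpa using this
  have hDba : ξb 0 * ξa 1 - ξb 1 * ξa 0 ≠ 0 := fun h => hDab (by linear_combination -h)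
  have hDca : ξc 0 * ξa 1 - ξc 1 * ξa 0 ≠ 0 := fun h => hDac (by linear_combination -h)
  have hDcb : ξc 0 * ξb 1 - ξc 1 * ξb 0 ≠ 0 := fun h => hDbc (by linear_combination -h)
  -- nondegeneracy of the coefficient pairs
  have hsta : ¬(sa = 0 ∧ ta = 0) := by
    rintro ⟨h1, h2⟩
    apply hva
    have h00 : (1 : K) • va + (0 : K) • vb = va := by simp
    rw [← h00]
    apply hinj
    · rw [h00, hYa, h1, zero_smul]
    · rw [h00, hZa, h2, zero_smul]
  have hstb : ¬(sb = 0 ∧ tb = 0) := by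
    rintro ⟨h1, h2⟩
    apply hvb
    have h00 : (0 : K) • va + (1 : K) • vb = vb := by simp
    rw [← h00]
    apply hinj
    · rw [h00, hYb, h1, zero_smul]
    · rw [h00, hZb, h2, zero_smul]
  -- linear independence of va, vb
  have hind : LinearIndependent K ![va, vb] := by
    rw [LinearIndependent.pair_iff]
    intro s t hst
    by_contra hcon
    have hst' : s ≠ 0 ∨ t ≠ 0 := by tauto
    have hYe : (s * sa) • ξa = (-(t * sb)) • ξb := by
      have h0 : Y (s • va + t • vb) = 0 := by rw [hst, hY0]
      rw [hYlin, hYa, hYb, smul_smul, smul_smul] at h0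
      funext i
      have := congrFun h0 i
      simp [Pi.smul_apply, smul_eq_mul] at this ⊢
      linear_combination this
    have hZe : (s * ta) • ξa = (-(t * tb)) • ξb := by
      have h0 : Z (s • va + t • vb) = 0 := by rw [hst, hZ0]
      rw [hZlin, hZa, hZb, smul_smul, smul_smul] at h0
      funext i
      have := congrFun h0 i
      simp [Pi.smul_apply, smul_eq_mul] at this ⊢
      linear_combination this
    obtain ⟨hY1, hY2⟩ := smul_eq_smul_of hDab hYe
    obtain ⟨hZ1, hZ2⟩ := smul_eq_smul_of hDab hZe
    rcases hst' with h | h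
    · exact hsta ⟨(mul_eq_zero.mp hY1).resolve_left h, (mul_eq_zero.mp hZ1).resolve_left h⟩
    · refine hstb ⟨?_, ?_⟩
      · exact (mul_eq_zero.mp (neg_eq_zero.mp hY2)).resolve_left h
      · exact (mul_eq_zero.mp (neg_eq_zero.mp hZ2)).resolve_left h
  -- W is the span of va and vb
  have hspan : Submodule.span K {va, vb} = W := by
    apply Submodule.eq_of_le_of_finrank_le
    · rw [Submodule.span_le]
      intro z hz
      rcases hz with h | h
      · simpa [h] using hvaW
      · simp only [Set.mem_singleton_iff] at h; simpa [h] using hvbW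
    · rw [hW]
      have h1 : ({va, vb} : Set (Fin 5 → K)) = Set.range ![va, vb] := by
        rw [Matrix.range_cons_cons_empty]
      rw [h1, finrank_span_eq_card hind]
      simp
  have hvc' : vc ∈ Submodule.span K {va, vb} := by rw [hspan]; exact hvcW
  obtain ⟨α, β, hαβ⟩ := Submodule.mem_span_pair.mp hvc'
  -- α and β are nonzero
  have hα : α ≠ 0 := by
    intro h0
    rw [h0, zero_smul, zero_add] at hαβ
    have hYe : sc • ξc = (β * sb) • ξb := by rw [← hYc, ← hαβ, hYs, hYb, smul_smul]
    have hZe : tc • ξc = (β * tb) • ξb := by rw [← hZc, ← hαβ, hZs, hZb, smul_smul]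
    obtain ⟨hsc0, -⟩ := smul_eq_smul_of hDcb hYe
    obtain ⟨htc0, -⟩ := smul_eq_smul_of hDcb hZe
    apply hvc
    have h00 : (0 : K) • va + β • vb = vc := by rw [zero_smul, zero_add]; exact hαβ
    rw [← h00]
    apply hinj
    · rw [h00, hYc, hsc0, zero_smul]
    · rw [h00, hZc, htc0, zero_smul]
  have hβ : β ≠ 0 := by
    intro h0
    rw [h0, zero_smul, add_zero] at hαβ
    have hYe : sc • ξc = (α * sa) • ξa := by rw [← hYc, ← hαβ, hYs, hYa, smul_smul]
    have hZe : tc • ξc = (α * ta) • ξa := by rw [← hZc, ← hαβ, hZs, hZa, smul_smul]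
    obtain ⟨hsc0, -⟩ := smul_eq_smul_of hDca hYe
    obtain ⟨htc0, -⟩ := smul_eq_smul_of hDca hZe
    apply hvc
    have h00 : α • va + (0 : K) • vb = vc := by rw [zero_smul, add_zero]; exact hαβ
    rw [← h00]
    apply hinj
    · rw [h00, hYc, hsc0, zero_smul]
    · rw [h00, hZc, htc0, zero_smul]
  -- the key quadratic relation
  have hYE : sc • ξc = (α * sa) • ξa + (β * sb) • ξb := by
    rw [← hYc, ← hαβ, hYlin, hYa, hYb, smul_smul, smul_smul]
  have hZE : tc • ξc = (α * ta) • ξa + (β * tb) • ξb := by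
    rw [← hZc, ← hαβ, hZlin, hZa, hZb, smul_smul, smul_smul]
  have E1 := congrFun hYE 0
  have E2 := congrFun hYE 1
  have E3 := congrFun hZE 0
  have E4 := congrFun hZE 1
  simp only [Pi.add_apply, Pi.smul_apply, smul_eq_mul] at E1 E2 E3 E4
  have hkey0 : α * β * ((sa * tb - sb * ta) * (ξa 0 * ξb 1 - ξa 1 * ξb 0)) = 0 := by
    linear_combination (-(α * ta * ξa 1 + β * tb * ξb 1)) * E1 +
      (α * ta * ξa 0 + β * tb * ξb 0) * E2 + (sc * ξc 1) * E3 + (-(sc * ξc 0)) * E4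
  have hkey : sa * tb = sb * ta := by
    rcases mul_eq_zero.mp hkey0 with h | h
    · rcases mul_eq_zero.mp h with h' | h'
      · exact absurd h' hα
      · exact absurd h' hβ
    · rcases mul_eq_zero.mp h with h' | h'
      · linear_combination h'
      · exact absurd h' hDab
  -- now construct the point on the line corresponding to x
  by_cases htt : ta = 0 ∧ tb = 0
  · have hsa : sa ≠ 0 := fun h => hsta ⟨h, htt.1⟩
    have hsb : sb ≠ 0 := fun h => hstb ⟨h, htt.2⟩
    refine ⟨a / sa, b / sb, ?_, 1, 0, ?_, ?_⟩
    · intro h0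
      obtain ⟨h1, h2⟩ := LinearIndependent.pair_iff.mp hind _ _ h0
      apply hab
      rw [div_eq_zero_iff] at h1 h2
      exact ⟨h1.resolve_right hsa, h2.resolve_right hsb⟩
    · rw [hYlin, hYa, hYb, smul_smul, smul_smul, div_mul_cancel₀ _ hsa,
        div_mul_cancel₀ _ hsb, one_smul, hxx]
    · rw [hZlin, hZa, hZb, htt.1, htt.2, zero_smul, zero_smul, zero_smul]
      simp
  · have htt' : ta ≠ 0 ∨ tb ≠ 0 := by tauto
    by_cases hb0 : b = 0
    · have ha0 : a ≠ 0 := fun h => hab ⟨h, hb0⟩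
      have hx' : x = a • ξa := by rw [hxx, hb0, zero_smul, add_zero]
      have hw : (1 : K) • va + (0 : K) • vb = va := by simp
      refine ⟨1, 0, ?_, sa / a, ta / a, ?_, ?_⟩
      · rw [hw]; exact hva
      · rw [hw, hYa, hx', smul_smul, div_mul_cancel₀ _ ha0]
      · rw [hw, hZa, hx', smul_smul, div_mul_cancel₀ _ ha0]
    · by_cases ha0 : a = 0
      · have hx' : x = b • ξb := by rw [hxx, ha0, zero_smul, zero_add]
        have hw : (0 : K) • va + (1 : K) • vb = vb := by simp
        refine ⟨0, 1, ?_, sb / b, tb / b, ?_, ?_⟩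
        · rw [hw]; exact hvb
        · rw [hw, hYb, hx', smul_smul, div_mul_cancel₀ _ hb0]
        · rw [hw, hZb, hx', smul_smul, div_mul_cancel₀ _ hb0]
      · have hrs : ¬(a * tb = 0 ∧ b * ta = 0) := by
          rintro ⟨h1, h2⟩
          rcases htt' with h | h
          · exact hb0 ((mul_eq_zero.mp h2).resolve_right h)
          · exact ha0 ((mul_eq_zero.mp h1).resolve_right h)
        refine ⟨a * tb, b * ta, ?_, sa * tb, ta * tb, ?_, ?_⟩
        · intro h0
          obtain ⟨h1, h2⟩ := LinearIndependent.pair_iff.mp hind _ _ h0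
          exact hrs ⟨h1, h2⟩
        · rw [hYlin, hYa, hYb, smul_smul, smul_smul, hxx]
          funext i
          simp only [Pi.add_apply, Pi.smul_apply, smul_eq_mul]
          linear_combination (-(b * ξb i)) * hkey
        · rw [hZlin, hZa, hZb, smul_smul, smul_smul, hxx]
          funext i
          simp only [Pi.add_apply, Pi.smul_apply, smul_eq_mul]
          ring

lemma exists_param (z : Fin 2 → K) (hz : z ≠ 0) :
    ∃ (t : Option K) (c : K), c ≠ 0 ∧ pvec t = c • z ∧ ptInfVec t = c • ![z 0, z 1, 0] := by
  by_cases h1 : z 1 = 0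
  · have h0 : z 0 ≠ 0 := by
      intro h0; apply hz; funext i; fin_cases i <;> assumption
    refine ⟨none, (z 0)⁻¹, inv_ne_zero h0, ?_, ?_⟩
    · funext i; fin_cases i <;> simp [pvec, h1, h0]
    · funext i; fin_cases i <;> simp [ptInfVec, h1, h0]
  · refine ⟨some (z 0 / z 1), (z 1)⁻¹, inv_ne_zero h1, ?_, ?_⟩
    · funext i; fin_cases i <;> simp [pvec, h1] <;> field_simp <;> ring
    · funext i; fin_cases i <;> simp [ptInfVec, h1] <;> field_simp <;> ring

lemma span_pair_smul_smul (c1 c2 : K) (hc1 : c1 ≠ 0) (hc2 : c2 ≠ 0) (u1 u2 : Fin n → K) :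
    Submodule.span K {c1 • u1, c2 • u2} = Submodule.span K {u1, u2} := by
  apply le_antisymm
  · rw [Submodule.span_le]
    rintro z (h | h)
    · rw [h]; exact Submodule.mem_span_pair.mpr ⟨c1, 0, by simp⟩
    · simp only [Set.mem_singleton_iff] at h
      rw [h]; exact Submodule.mem_span_pair.mpr ⟨0, c2, by simp⟩
  · rw [Submodule.span_le]
    rintro z (h | h)
    · rw [h]; exact Submodule.mem_span_pair.mpr ⟨c1⁻¹, 0, by simp [smul_smul, inv_mul_cancel₀ hc1]⟩
    · simp only [Set.mem_singleton_iff] at h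
      rw [h]; exact Submodule.mem_span_pair.mpr ⟨0, c2⁻¹, by simp [smul_smul, inv_mul_cancel₀ hc2]⟩

lemma mk_mem_ptsOf {W : Submodule K (Fin n → K)} (w : Fin n → K) (hw : w ≠ 0)
    (hmem : w ∈ W) : Projectivization.mk K w hw ∈ ptsOf W := by
  obtain ⟨c, hc, hrep⟩ := rep_eq_smul w hw
  show (Projectivization.mk K w hw).rep ∈ W
  rw [hrep]
  exact W.smul_mem _ hmem

lemma frob2_frob2 {q : ℕ} (hKfix : ∀ x : K, (x ^ q) ^ q = x) (x : Fin 2 → K) :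
    frob2 q (frob2 q x) = x := by
  funext i; simp [frob2, hKfix]

lemma lineTh_gg (τ : K) (q : ℕ) (t t' : Option K) :
    lineTh (gpt τ q t) (gqpt τ q t') =
      ptsOf (Submodule.span K {gptVec τ q t, gqptVec τ q t'}) := by
  obtain ⟨c, hc, hrep⟩ := rep_eq_smul (gptVec τ q t) (gptVec_ne τ q t)
  obtain ⟨c', hc', hrep'⟩ := rep_eq_smul (gqptVec τ q t') (gqptVec_ne τ q t')
  unfold lineTh
  rw [show (gpt τ q t).rep = c • gptVec τ q t from hrep,
    show (gqpt τ q t').rep = c' • gqptVec τ q t' from hrep',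
    span_pair_smul_smul c c' hc hc']

lemma lineTh_gg' (τ : K) (q : ℕ) (t t' : Option K) :
    lineTh (gqpt τ q t) (gpt τ q t') =
      ptsOf (Submodule.span K {gptVec τ q t', gqptVec τ q t}) := by
  obtain ⟨c, hc, hrep⟩ := rep_eq_smul (gqptVec τ q t) (gqptVec_ne τ q t)
  obtain ⟨c', hc', hrep'⟩ := rep_eq_smul (gptVec τ q t') (gptVec_ne τ q t')
  unfold lineTh
  rw [show (gqpt τ q t).rep = c • gqptVec τ q t from hrep,
    show (gpt τ q t').rep = c' • gptVec τ q t' from hrep',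
    span_pair_smul_smul c c' hc hc', Set.pair_comm]

set_option maxHeartbeats 1000000 in
/-- If `P̄, Q̄ ∈ ℓ∞` are conjugate with respect to a Baer subline `b` of `ℓ∞`, then the
lines `PQ^q` and `P^qQ` of `PG(4,q²)` belong to the regulus opposite to the regulus of
transversals of `{[T]⋆ : T̄ ∈ b}`: they meet every line meeting all the `[T]⋆`. -/
theorem statement_6
    {F K : Type} [Field F] [Field K] [Fintype F] [Fintype K] [Algebra F K]
    (q : ℕ) (hq : Fintype.card F = q) (hK : Fintype.card K = q ^ 2)
    (τ : K) (t0 t1 : F)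
    (hτ : τ ^ 2 = algebraMap F K t1 * τ + algebraMap F K t0)
    (hτF : τ ∉ Set.range (algebraMap F K))
    (c0 c1 : K → F)
    (hc : ∀ x : K, x = algebraMap F K (c0 x) + algebraMap F K (c1 x) * τ)
    (b : Set (PP K 3)) (tP tQ : Option K)
    (hconj : ConjWrtSubline F q b (ptInf tP) (ptInf tQ)) :
    ∀ mℓ : Set (PP K 5), IsFlat 1 mℓ →
      (∀ t : Option K, ptInf t ∈ b →
        (mℓ ∩ extSpreadLine F c0 c1 t0 t1 t).Nonempty) →
      (mℓ ∩ lineTh (gpt τ q tP) (gqpt τ q tQ)).Nonempty ∧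
      (mℓ ∩ lineTh (gqpt τ q tP) (gpt τ q tQ)).Nonempty := by
  obtain ⟨hadd, hfix, hKfix, h2q⟩ := frob_facts F K q hq hK
  have hq0 : q ≠ 0 := by omega
  have hne : τ ^ q ≠ τ := tau_pow_ne hq h2q hfix hτF
  have hτq2 : (τ ^ q) ^ 2 = algebraMap F K t1 * τ ^ q + algebraMap F K t0 := by
    have h1 : (τ ^ q) ^ 2 = (τ ^ 2) ^ q := by rw [← pow_mul, ← pow_mul, mul_comm]
    rw [h1, hτ, hadd, mul_pow, hfix, hfix]
  have hcq : ∀ x : K, x ^ q = algebraMap F K (c0 x) + algebraMap F K (c1 x) * τ ^ q := by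
    intro x
    conv_lhs => rw [hc x]
    rw [hadd, mul_pow, hfix, hfix]
  obtain ⟨M, hM, hlinf, hb, P₀, hP, hQ⟩ := hconj
  have hMdet : M.det ≠ 0 := hM.ne_zero
  have hMv_ne : ∀ v : Fin 3 → K, v ≠ 0 → M.mulVec v ≠ 0 := by
    intro v hv h
    exact hv (mulVec_inj M hM (h.trans (M.mulVec_zero).symm))
  have hrow : ∀ (v : Fin 3 → K) (hv : v ≠ 0), v 2 = 0 → (M.mulVec v) 2 = 0 := by
    intro v hv hv2
    have hmem : Projectivization.mk K (M.mulVec v) (hMv_ne v hv) ∈ linf K := by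
      rw [← hlinf]
      exact ⟨v, ⟨hv, hv2⟩, hMv_ne v hv, rfl⟩
    obtain ⟨c, hc0, hrep⟩ := rep_eq_smul (M.mulVec v) (hMv_ne v hv)
    have h2 : (Projectivization.mk K (M.mulVec v) (hMv_ne v hv)).rep 2 = 0 := hmem
    rw [hrep] at h2
    simpa [hc0] using h2
  have hM20 : M 2 0 = 0 := by
    have h := hrow ![1, 0, 0] (by intro h; have := congrFun h 0; simp at this) (by simp)
    simpa [Matrix.mulVec, dotProduct, Fin.sum_univ_three] using h
  have hM21 : M 2 1 = 0 := by
    have h := hrow ![0, 1, 0] (by intro h; have := congrFun h 1; simp at this) (by simp)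
    simpa [Matrix.mulVec, dotProduct, Fin.sum_univ_three] using h
  have hdetM : M.det = M 2 2 * (M 0 0 * M 1 1 - M 0 1 * M 1 0) := by
    rw [Matrix.det_fin_three, hM20, hM21]; ring
  set dN : K := M 0 0 * M 1 1 - M 0 1 * M 1 0 with hdN'
  have hdN : dN ≠ 0 := by
    intro h; apply hMdet; rw [hdetM, h, mul_zero]
  have hM22 : M 2 2 ≠ 0 := fun h => hMdet (by rw [hdetM, h, zero_mul])
  set dNq : K := M 0 0 ^ q * M 1 1 ^ q - M 0 1 ^ q * M 1 0 ^ q with hdNq'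
  have hdNq : dNq ≠ 0 := by
    intro h
    apply hdN
    have h1 : ((M 0 0 * M 1 1) ^ q) = ((M 0 1 * M 1 0) ^ q) := by
      rw [mul_pow, mul_pow]; rw [hdNq'] at h; linear_combination h
    have h2 : M 0 0 * M 1 1 = M 0 1 * M 1 0 := by
      rw [← hKfix (M 0 0 * M 1 1), h1, hKfix]
    rw [hdN']; linear_combination h2
  -- the 2x2 block and its Frobenius twist, acting on parameter vectors
  set Nv : (Fin 2 → K) → Fin 2 → K :=
    fun x => ![M 0 0 * x 0 + M 0 1 * x 1, M 1 0 * x 0 + M 1 1 * x 1] with hNv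
  set Nqv : (Fin 2 → K) → Fin 2 → K :=
    fun x => ![M 0 0 ^ q * x 0 + M 0 1 ^ q * x 1, M 1 0 ^ q * x 0 + M 1 1 ^ q * x 1] with hNqv
  set Yf : (Fin 5 → K) → Fin 2 → K :=
    fun w => ![M 1 1 * ycc τ w 0 - M 0 1 * ycc τ w 1,
               M 0 0 * ycc τ w 1 - M 1 0 * ycc τ w 0] with hYf
  set Zf : (Fin 5 → K) → Fin 2 → K :=
    fun w => ![M 1 1 ^ q * ycc (τ ^ q) w 0 - M 0 1 ^ q * ycc (τ ^ q) w 1,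
               M 0 0 ^ q * ycc (τ ^ q) w 1 - M 1 0 ^ q * ycc (τ ^ q) w 0] with hZf
  have hYadj : ∀ (c : K) (x : Fin 2 → K) (w : Fin 5 → K),
      ycc τ w = c • Nv x → Yf w = (c * dN) • x := by
    intro c x w h
    funext i
    fin_cases i <;> simp [hYf, h, hNv, hdN'] <;> ring
  have hZadj : ∀ (c : K) (x : Fin 2 → K) (w : Fin 5 → K),
      ycc (τ ^ q) w = c • Nqv x → Zf w = (c * dNq) • x := by
    intro c x w h
    funext i
    fin_cases i <;> simp [hZf, h, hNqv, hdNq'] <;> ring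
  have hYrec : ∀ w : Fin 5 → K, Yf w = 0 → ycc τ w = 0 := by
    intro w h
    have h0 := congrFun h 0
    have h1 := congrFun h 1
    simp [hYf] at h0 h1
    funext i
    fin_cases i
    · show ycc τ w 0 = 0
      apply mul_left_cancel₀ hdN
      rw [hdN', mul_zero]; linear_combination M 0 0 * h0 + M 0 1 * h1
    · show ycc τ w 1 = 0
      apply mul_left_cancel₀ hdN
      rw [hdN', mul_zero]; linear_combination M 1 0 * h0 + M 1 1 * h1
  have hZrec : ∀ w : Fin 5 → K, Zf w = 0 → ycc (τ ^ q) w = 0 := by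
    intro w h
    have h0 := congrFun h 0
    have h1 := congrFun h 1
    simp [hZf] at h0 h1
    funext i
    fin_cases i
    · show ycc (τ ^ q) w 0 = 0
      apply mul_left_cancel₀ hdNq
      rw [hdNq', mul_zero]; linear_combination M 0 0 ^ q * h0 + M 0 1 ^ q * h1
    · show ycc (τ ^ q) w 1 = 0
      apply mul_left_cancel₀ hdNq
      rw [hdNq', mul_zero]; linear_combination M 1 0 ^ q * h0 + M 1 1 ^ q * h1
  have hYlin : ∀ (a b : K) (u v : Fin 5 → K), Yf (a • u + b • v) = a • Yf u + b • Yf v := by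
    intro a b u v
    funext i
    fin_cases i <;> simp [hYf, ycc_comb] <;> ring
  have hZlin : ∀ (a b : K) (u v : Fin 5 → K), Zf (a • u + b • v) = a • Zf u + b • Zf v := by
    intro a b u v
    funext i
    fin_cases i <;> simp [hZf, ycc_comb] <;> ring
  have hYinv : ∀ (w : Fin 5 → K) (σ : K) (x : Fin 2 → K),
      Yf w = σ • x → ycc τ w = (σ / dN) • Nv x := by
    intro w σ x h
    have h0 := congrFun h 0
    have h1 := congrFun h 1
    simp [hYf] at h0 h1
    funext i
    fin_cases i
    · show ycc τ w 0 = σ / dN * Nv x 0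
      apply mul_left_cancel₀ hdN
      have hr : dN * (σ / dN * Nv x 0) = σ * Nv x 0 := by field_simp
      rw [hr, hdN']
      simp only [hNv]
      simp only [Matrix.cons_val_zero]
      linear_combination M 0 0 * h0 + M 0 1 * h1
    · show ycc τ w 1 = σ / dN * Nv x 1
      apply mul_left_cancel₀ hdN
      have hr : dN * (σ / dN * Nv x 1) = σ * Nv x 1 := by field_simp
      rw [hr, hdN']
      simp only [hNv]
      simp only [Matrix.cons_val_one, Matrix.head_cons, Matrix.cons_val_zero]
      linear_combination M 1 0 * h0 + M 1 1 * h1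
  have hZinv : ∀ (w : Fin 5 → K) (σ : K) (x : Fin 2 → K),
      Zf w = σ • x → ycc (τ ^ q) w = (σ / dNq) • Nqv x := by
    intro w σ x h
    have h0 := congrFun h 0
    have h1 := congrFun h 1
    simp [hZf] at h0 h1
    funext i
    fin_cases i
    · show ycc (τ ^ q) w 0 = σ / dNq * Nqv x 0
      apply mul_left_cancel₀ hdNq
      have hr : dNq * (σ / dNq * Nqv x 0) = σ * Nqv x 0 := by field_simp
      rw [hr, hdNq']
      simp only [hNqv]
      simp only [Matrix.cons_val_zero]
      linear_combination M 0 0 ^ q * h0 + M 0 1 ^ q * h1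
    · show ycc (τ ^ q) w 1 = σ / dNq * Nqv x 1
      apply mul_left_cancel₀ hdNq
      have hr : dNq * (σ / dNq * Nqv x 1) = σ * Nqv x 1 := by field_simp
      rw [hr, hdNq']
      simp only [hNqv]
      simp only [Matrix.cons_val_one, Matrix.head_cons, Matrix.cons_val_zero]
      linear_combination M 1 0 ^ q * h0 + M 1 1 ^ q * h1
  have hfrobNv : ∀ x : Fin 2 → K, frob2 q (Nv x) = Nqv (frob2 q x) := by
    intro x
    funext i
    fin_cases i <;> simp [hNv, hNqv, frob2, hadd, mul_pow]
  have hNvne : ∀ x : Fin 2 → K, x ≠ 0 → Nv x ≠ 0 := by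
    intro x hx h
    apply hx
    have h0 := congrFun h 0
    have h1 := congrFun h 1
    simp [hNv] at h0 h1
    funext i
    fin_cases i
    · show x 0 = 0
      apply mul_left_cancel₀ hdN
      rw [hdN', mul_zero]; linear_combination M 1 1 * h0 - M 0 1 * h1
    · show x 1 = 0
      apply mul_left_cancel₀ hdN
      rw [hdN', mul_zero]; linear_combination M 0 0 * h1 - M 1 0 * h0
  -- reformulated action of M on vectors with last coordinate 0
  have hMulV : ∀ x : Fin 2 → K, M.mulVec ![x 0, x 1, 0] = ![Nv x 0, Nv x 1, 0] := by
    intro x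
    funext i
    fin_cases i <;>
      simp [Matrix.mulVec, dotProduct, Fin.sum_univ_three, hNv, hM20, hM21]
  -- unpack the data of P
  obtain ⟨uP, huP⟩ := (Projectivization.mk_eq_mk_iff K _ _ _ _).mp hP
  set r : Fin 3 → K := P₀.rep with hr'
  have hrne : r ≠ 0 := P₀.rep_nonzero
  have hMr2 : (M.mulVec r) 2 = 0 := by
    have h2 := congrFun huP 2
    have hpt2 : ptInfVec tP 2 = 0 := by rw [ptInfVec_eq]; simp
    simp only [Pi.smul_apply, smul_eq_mul, hpt2] at h2
    exact (mul_eq_zero.mp h2).resolve_left uP.ne_zero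
  have hr2 : r 2 = 0 := by
    have hM2 : (M.mulVec r) 2 = M 2 2 * r 2 := by
      simp [Matrix.mulVec, dotProduct, Fin.sum_univ_three, hM20, hM21]
    rw [hM2] at hMr2
    exact (mul_eq_zero.mp hMr2).resolve_left hM22
  set y : Fin 2 → K := ![r 0, r 1] with hy'
  have hyne : y ≠ 0 := by
    intro h
    have h0 := congrFun h 0
    have h1 := congrFun h 1
    simp [hy'] at h0 h1
    apply hrne
    funext i
    fin_cases i <;> simp [h0, h1, hr2]
  have hrfor : r = ![y 0, y 1, 0] := by
    funext i
    fin_cases i <;> simp [hy', hr2]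
  have hpP : pvec tP = (uP : K) • Nv y := by
    rw [hrfor, hMulV] at huP
    rw [ptInfVec_eq] at huP
    have e0 := congrFun huP 0
    have e1 := congrFun huP 1
    simp only [Pi.smul_apply, smul_eq_mul, Matrix.cons_val_zero, Matrix.cons_val_one,
      Matrix.head_cons] at e0 e1
    funext i
    fin_cases i
    · show pvec tP 0 = ((uP : K) • Nv y) 0
      simp only [Pi.smul_apply, smul_eq_mul]
      rw [← e0]; simp [Units.smul_def]
    · show pvec tP 1 = ((uP : K) • Nv y) 1
      simp only [Pi.smul_apply, smul_eq_mul]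
      rw [← e1]; simp [Units.smul_def]
  -- unpack the data of Q
  obtain ⟨uQ, huQ⟩ := (Projectivization.mk_eq_mk_iff K _ _ _ _).mp hQ
  obtain ⟨d, hd0, hdrep⟩ := rep_eq_smul (fun i => P₀.rep i ^ q) (by
    obtain ⟨i, hi⟩ := Function.ne_iff.mp P₀.rep_nonzero
    intro h
    exact pow_ne_zero q (by simpa using hi) (by simpa using congrFun h i))
  have hdrep' : (frobPt q P₀).rep = d • fun i => P₀.rep i ^ q := hdrep
  rw [hdrep', Matrix.mulVec_smul] at huQ
  have hrq : (fun i => P₀.rep i ^ q) = ![(frob2 q y) 0, (frob2 q y) 1, 0] := by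
    funext i
    fin_cases i <;> simp [frob2, hy', ← hr', hr2, zero_pow hq0]
  rw [hrq, hMulV] at huQ
  have hfyne : frob2 q y ≠ 0 := by
    intro h
    apply hyne
    obtain ⟨i, hi⟩ := Function.ne_iff.mp hyne
    exact absurd (by simpa [frob2] using congrFun h i) (pow_ne_zero q hi)
  set cQ : K := (uQ : K) * d with hcQ'
  have hcQ0 : cQ ≠ 0 := mul_ne_zero uQ.ne_zero hd0
  have hpQ : pvec tQ = cQ • Nv (frob2 q y) := by
    rw [ptInfVec_eq] at huQ
    have e0 := congrFun huQ 0
    have e1 := congrFun huQ 1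
    simp only [Pi.smul_apply, smul_eq_mul, Matrix.cons_val_zero, Matrix.cons_val_one,
      Matrix.head_cons] at e0 e1
    funext i
    fin_cases i
    · show pvec tQ 0 = (cQ • Nv (frob2 q y)) 0
      simp only [Pi.smul_apply, smul_eq_mul, hcQ']
      rw [← e0]; simp [Units.smul_def]; ring
    · show pvec tQ 1 = (cQ • Nv (frob2 q y)) 1
      simp only [Pi.smul_apply, smul_eq_mul, hcQ']
      rw [← e1]; simp [Units.smul_def]; ring
  have hycc0 : ∀ c : K, ycc c (0 : Fin 5 → K) = 0 := by
    intro c; funext i; fin_cases i <;> simp [ycc]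
  obtain ⟨aF, haF⟩ := exists_ne (0 : F)
  have haNe : algebraMap F K aF ≠ 0 := by
    intro h; exact haF ((algebraMap F K).injective (by rw [h, map_zero]))
  intro mℓ hflat hmeet
  obtain ⟨W, hWrank, hWeq⟩ := hflat
  have hW2 : Module.finrank K W = 2 := hWrank
  have getdata : ∀ ξ : Fin 2 → K, ξ ≠ 0 → frob2 q ξ = ξ →
      (![ξ 0, ξ 1, 0] ∈ sublineVecs F K) →
      ∃ (v : Fin 5 → K) (s t : K), v ∈ W ∧ v ≠ 0 ∧ v 4 = 0 ∧
        Yf v = s • ξ ∧ Zf v = t • ξ := by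
    intro ξ hξ hfρ hsub
    have hξ3 : (![ξ 0, ξ 1, 0] : Fin 3 → K) ≠ 0 := by
      intro h
      apply hξ
      funext i
      fin_cases i
      · exact congrFun h 0
      · exact congrFun h 1
    obtain ⟨t, c, hc0, hpvec, hptv⟩ := exists_param (Nv ξ) (hNvne ξ hξ)
    have hbmem : ptInf t ∈ b := by
      rw [hb]
      refine ⟨![ξ 0, ξ 1, 0], hsub, hMv_ne _ hξ3, ?_⟩
      exact mk_eq_of_smul _ _ (ptInfVec_ne t) (hMv_ne _ hξ3) c hc0
        (by rw [hMulV ξ]; exact hptv)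
    obtain ⟨p, hpml, hpE⟩ := hmeet t hbmem
    rw [hWeq] at hpml
    have hpW : p.rep ∈ W := hpml
    have hpE' : p.rep ∈ Submodule.span K
        {algVec F (spreadV1 c0 c1 t), algVec F (spreadV2 c0 c1 t0 t1 t)} := hpE
    obtain ⟨α, β, hαβ⟩ := Submodule.mem_span_pair.mp hpE'
    obtain ⟨hy1, hy2, hy4⟩ := ycc_spread τ hq0 t0 t1 c0 c1 hτ hτq2 hc hcq t α β
    rw [hαβ] at hy1 hy2 hy4
    refine ⟨p.rep, (α + β * τ) * c * dN, (α + β * τ ^ q) * c ^ q * dNq, hpW,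
      p.rep_nonzero, hy4, ?_, ?_⟩
    · apply hYadj
      rw [hy1, hpvec, smul_smul]
    · apply hZadj
      rw [hy2, hpvec, frob2_smul, hfrobNv, hfρ, smul_smul]
  obtain ⟨va, sa, ta, hvaW, hva, hva4, hYa, hZa⟩ := getdata ![0, 1]
    (by intro h; have := congrFun h 1; simp at this)
    (by funext i; fin_cases i <;> simp [frob2, zero_pow hq0])
    (Or.inl ⟨0, by funext i; fin_cases i <;> simp⟩)
  obtain ⟨vb, sb, tb, hvbW, hvb, hvb4, hYb, hZb⟩ := getdata ![1, 0]
    (by intro h; have := congrFun h 0; simp at this)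
    (by funext i; fin_cases i <;> simp [frob2, zero_pow hq0])
    (Or.inr (Set.mem_singleton_iff.mpr (by funext i; fin_cases i <;> simp)))
  obtain ⟨vc, sc, tc, hvcW, hvc, hvc4, hYc, hZc⟩ := getdata ![algebraMap F K aF, 1]
    (by intro h; have := congrFun h 1; simp at this)
    (by funext i; fin_cases i <;> simp [frob2, hfix aF, zero_pow hq0])
    (Or.inl ⟨aF, by funext i; fin_cases i <;> simp⟩)
  have hinj : ∀ rr ss : K, Yf (rr • va + ss • vb) = 0 → Zf (rr • va + ss • vb) = 0 →
      rr • va + ss • vb = 0 := by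
    intro rr ss h1 h2
    refine ycc_recon hne _ 0 ?_ ?_ ?_
    · rw [hYrec _ h1, hycc0]
    · rw [hZrec _ h2, hycc0]
    · simp [hva4, hvb4]
  have hDab : (![0,1] : Fin 2 → K) 0 * (![1,0] : Fin 2 → K) 1 -
      (![0,1] : Fin 2 → K) 1 * (![1,0] : Fin 2 → K) 0 ≠ 0 := by norm_num
  have hDac : (![0,1] : Fin 2 → K) 0 * (![algebraMap F K aF, 1] : Fin 2 → K) 1 -
      (![0,1] : Fin 2 → K) 1 * (![algebraMap F K aF, 1] : Fin 2 → K) 0 ≠ 0 := by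
    simpa using haNe
  have hDbc : (![1,0] : Fin 2 → K) 0 * (![algebraMap F K aF, 1] : Fin 2 → K) 1 -
      (![1,0] : Fin 2 → K) 1 * (![algebraMap F K aF, 1] : Fin 2 → K) 0 ≠ 0 := by
    norm_num
  constructor
  · -- the line P Q^q
    have hxx : y = y 1 • ![0,1] + y 0 • ![1,0] := by
      funext i; fin_cases i <;> simp
    have hab : ¬(y 1 = 0 ∧ y 0 = 0) := by
      rintro ⟨h1, h0⟩
      apply hyne; funext i; fin_cases i <;> assumption
    obtain ⟨rr, ss, hwne, σ, θ, hYw, hZw⟩ :=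
      core hW2 Yf Zf hYlin hZlin va vb vc ![0,1] ![1,0] ![algebraMap F K aF, 1] y
        sa ta sb tb sc tc hinj hva hvb hvc hvaW hvbW hvcW hYa hZa hYb hZb hYc hZc
        hDab hDac hDbc (y 1) (y 0) hab hxx
    set w := rr • va + ss • vb with hw'
    have hwW : w ∈ W := W.add_mem (W.smul_mem _ hvaW) (W.smul_mem _ hvbW)
    have hw4 : w 4 = 0 := by simp [hw', hva4, hvb4]
    have hyc1 : ycc τ w = (σ / dN * (uP : K)⁻¹) • pvec tP := by
      rw [hYinv w σ y hYw, hpP, smul_smul]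
      congr 1
      field_simp
    have hNqy : frob2 q (pvec tQ) = cQ ^ q • Nqv y := by
      rw [hpQ, frob2_smul, hfrobNv, frob2_frob2 hKfix]
    have hzc1 : ycc (τ ^ q) w = (θ / dNq * (cQ ^ q)⁻¹) • frob2 q (pvec tQ) := by
      rw [hZinv w θ y hZw, hNqy, smul_smul]
      congr 1
      have hcq0 : cQ ^ q ≠ 0 := pow_ne_zero _ hcQ0
      field_simp
    have hspan := mem_gspan hne hq0 tP tQ w _ _ hyc1 hzc1 hw4
    exact ⟨Projectivization.mk K w hwne,
      by rw [hWeq]; exact mk_mem_ptsOf w hwne hwW,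
      by rw [lineTh_gg]; exact mk_mem_ptsOf w hwne hspan⟩
  · -- the line P^q Q
    have hxx : frob2 q y = (frob2 q y) 1 • ![0,1] + (frob2 q y) 0 • ![1,0] := by
      funext i; fin_cases i <;> simp
    have hab : ¬((frob2 q y) 1 = 0 ∧ (frob2 q y) 0 = 0) := by
      rintro ⟨h1, h0⟩
      apply hfyne; funext i; fin_cases i <;> assumption
    obtain ⟨rr, ss, hwne, σ, θ, hYw, hZw⟩ :=
      core hW2 Yf Zf hYlin hZlin va vb vc ![0,1] ![1,0] ![algebraMap F K aF, 1]
        (frob2 q y) sa ta sb tb sc tc hinj hva hvb hvc hvaW hvbW hvcW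
        hYa hZa hYb hZb hYc hZc hDab hDac hDbc ((frob2 q y) 1) ((frob2 q y) 0) hab hxx
    set w := rr • va + ss • vb with hw'
    have hwW : w ∈ W := W.add_mem (W.smul_mem _ hvaW) (W.smul_mem _ hvbW)
    have hw4 : w 4 = 0 := by simp [hw', hva4, hvb4]
    have hyc2 : ycc τ w = (σ / dN * cQ⁻¹) • pvec tQ := by
      rw [hYinv w σ _ hYw, hpQ, smul_smul]
      congr 1
      field_simp
    have hfP : frob2 q (pvec tP) = (uP : K) ^ q • Nqv (frob2 q y) := by
      rw [hpP, frob2_smul, hfrobNv]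
    have hzc2 : ycc (τ ^ q) w = (θ / dNq * ((uP : K) ^ q)⁻¹) • frob2 q (pvec tP) := by
      rw [hZinv w θ _ hZw, hfP, smul_smul]
      congr 1
      have hup0 : (uP : K) ^ q ≠ 0 := pow_ne_zero _ uP.ne_zero
      field_simp
    have hspan := mem_gspan hne hq0 tQ tP w _ _ hyc2 hzc2 hw4
    exact ⟨Projectivization.mk K w hwne,
      by rw [hWeq]; exact mk_mem_ptsOf w hwne hwW,
      by rw [lineTh_gg']; exact mk_mem_ptsOf w hwne hspan⟩


end BaerConics
end
end

section
/- Let B be a Baer subplane of PG(2,q²) secant to ℓ∞, let α be a plane of PG(4,q) not contained in Σ∞ whose affine points are exactly the φ-images of the affine points of B, and let P̄, Q̄ ∈ ℓ∞ be conjugate with respect to B. Then in PG(4,q²), the lines PQ^q and P^qQ each meet the extended plane α⋆, where P, Q are the points of the transversal g corresponding to P̄, Q̄. -/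
open scoped Classical
open Matrix

noncomputable section

namespace BaerConics

variable {K : Type} [Field K] {m n : ℕ}

-- ===== Auxiliary lemmas (added) =====

lemma exists_unit_rep {K : Type} [Field K] {n : ℕ} (v : Fin n → K) (hv : v ≠ 0) :
    ∃ a : Kˣ, (Projectivization.mk K v hv).rep = (a : K) • v := by
  have h := Projectivization.mk_rep (Projectivization.mk K v hv)
  rw [Projectivization.mk_eq_mk_iff] at h
  obtain ⟨a, ha⟩ := h
  exact ⟨a, by rw [← ha]; simp [Units.smul_def]⟩

lemma frob_add' {F K : Type} [Field F] [Field K] [Fintype F] [Algebra F K]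
    {q : ℕ} (hq : Fintype.card F = q) (x y : K) : (x + y) ^ q = x ^ q + y ^ q := by
  obtain ⟨p, hp⟩ := CharP.exists F
  haveI := hp
  have hprime : p.Prime := CharP.char_is_prime F p
  haveI : CharP K p := charP_of_injective_algebraMap (algebraMap F K).injective p
  haveI := Fact.mk hprime
  obtain ⟨nn, hcard⟩ := FiniteField.card F p
  rw [← hq, hcard.2]
  exact add_pow_char_pow x y p nn

lemma pair_eq' {K : Type} [Field K] {τ σ a0 a1 b0 b1 : K} (hne : σ ≠ τ)
    (h1 : a0 + a1 * τ = b0 + b1 * τ) (h2 : a0 + a1 * σ = b0 + b1 * σ) :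
    a0 = b0 ∧ a1 = b1 := by
  have h3 : (a1 - b1) * (τ - σ) = 0 := by linear_combination h1 - h2
  have hts : τ - σ ≠ 0 := sub_ne_zero.mpr (Ne.symm hne)
  have h4 : a1 = b1 := sub_eq_zero.mp ((mul_eq_zero.mp h3).resolve_right hts)
  exact ⟨by linear_combination h1 - τ * h4, h4⟩

lemma fixed_mem_range' {F K : Type} [Field F] [Field K] [Fintype F] [Algebra F K]
    {q : ℕ} (hq : Fintype.card F = q)
    (hffix : ∀ a : F, (algebraMap F K a) ^ q = algebraMap F K a)
    (x : K) (hx : x ^ q = x) : x ∈ Set.range (algebraMap F K) := by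
  by_contra hxr
  classical
  set f : Polynomial K := Polynomial.X ^ q - Polynomial.X with hf
  have hq2 : 2 ≤ q := hq ▸ Fintype.one_lt_card
  have hfne : f ≠ 0 := by
    intro h0
    have := congrArg (fun g => Polynomial.coeff g q) h0
    simp only [hf, Polynomial.coeff_sub, Polynomial.coeff_X_pow, Polynomial.coeff_X,
      Polynomial.coeff_zero, if_pos rfl, if_neg (by omega : ¬ (1:ℕ) = q)] at this
    simp at this
  have hdeg : f.natDegree ≤ q := le_trans (Polynomial.natDegree_sub_le _ _) (by
    simp [Polynomial.natDegree_X_pow, Polynomial.natDegree_X]; omega)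
  have hroot : ∀ y : K, y ^ q = y → y ∈ f.roots.toFinset := by
    intro y hy
    rw [Multiset.mem_toFinset, Polynomial.mem_roots hfne]
    simp [Polynomial.IsRoot, hf, hy]
  set img : Finset K := Finset.univ.image (algebraMap F K) with himg
  have hsub : insert x img ⊆ f.roots.toFinset := by
    intro y hy
    rcases Finset.mem_insert.mp hy with rfl | hy
    · exact hroot y hx
    · obtain ⟨a, _, rfl⟩ := Finset.mem_image.mp hy
      exact hroot _ (hffix a)
  have hxi : x ∉ img := by
    intro hxi
    obtain ⟨a, _, rfl⟩ := Finset.mem_image.mp hxi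
    exact hxr ⟨a, rfl⟩
  have h1 : (insert x img).card = q + 1 := by
    rw [Finset.card_insert_of_notMem hxi,
      Finset.card_image_of_injective _ (algebraMap F K).injective]
    simp [hq]
  have hcard : q + 1 ≤ (f.roots.toFinset).card := h1 ▸ Finset.card_le_card hsub
  have := le_trans (Multiset.toFinset_card_le _) (Polynomial.card_roots' f)
  omega

lemma coords_zero' {F K : Type} [Field F] [Field K] [Algebra F K] {τ : K}
    (hτF : τ ∉ Set.range (algebraMap F K)) (a b : F)
    (h : algebraMap F K a + algebraMap F K b * τ = 0) : a = 0 ∧ b = 0 := by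
  by_cases hb : b = 0
  · subst hb
    simp at h
    exact ⟨(algebraMap F K).injective (by simpa using h), rfl⟩
  · exfalso
    apply hτF
    refine ⟨-a / b, ?_⟩
    have hbK : algebraMap F K b ≠ 0 := by
      simpa using (algebraMap F K).injective.ne hb
    rw [map_div₀, map_neg]
    field_simp
    linear_combination -h

-- ===== end auxiliary lemmas =====

/-- If `B` is a Baer subplane secant to `ℓ∞`, represented in `PG(4,q)` by the plane `α`,
and `P̄, Q̄ ∈ ℓ∞` are conjugate with respect to `B`, then the lines `PQ^q` and `P^qQ`
of `PG(4,q²)` meet the extended plane `α⋆`. -/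
theorem statement_7
    {F K : Type} [Field F] [Field K] [Fintype F] [Fintype K] [Algebra F K]
    (q : ℕ) (hq : Fintype.card F = q) (hK : Fintype.card K = q ^ 2)
    (τ : K) (t0 t1 : F)
    (hτ : τ ^ 2 = algebraMap F K t1 * τ + algebraMap F K t0)
    (hτF : τ ∉ Set.range (algebraMap F K))
    (c0 c1 : K → F)
    (hc : ∀ x : K, x = algebraMap F K (c0 x) + algebraMap F K (c1 x) * τ)
    (B : Set (PP K 3)) (hB : IsBaerSubplane F B)
    (hsec : (B ∩ linf K).ncard = q + 1)
    (Wsub : Submodule F (Fin 5 → F)) (hW3 : Module.finrank F Wsub = 3)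
    (hWns : ¬ ptsOf Wsub ⊆ sinf F)
    (halpha : bb c0 c1 '' (B \ linf K) = ptsOf Wsub \ sinf F)
    (tP tQ : Option K)
    (hconj : ConjWrtSubline F q (B ∩ linf K) (ptInf tP) (ptInf tQ)) :
    (lineTh (gpt τ q tP) (gqpt τ q tQ) ∩ ptsOf (extSub F Wsub)).Nonempty ∧
    (lineTh (gqpt τ q tP) (gpt τ q tQ) ∩ ptsOf (extSub F Wsub)).Nonempty := by
  classical
  obtain ⟨Mb, hMbdet, hBeq⟩ := hB
  obtain ⟨M, hMdet, hMlinf, hbsub, P0, hP, hQ⟩ := hconj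
  -- numeric / Frobenius facts
  have hq2 : 2 ≤ q := hq ▸ Fintype.one_lt_card
  have hqne : q ≠ 0 := by omega
  have hfadd : ∀ x y : K, (x + y) ^ q = x ^ q + y ^ q := frob_add' hq
  have hffix : ∀ a : F, (algebraMap F K a) ^ q = algebraMap F K a := by
    intro a; rw [← map_pow]; congr 1; rw [← hq]; exact FiniteField.pow_card a
  have hqq : ∀ x : K, (x ^ q) ^ q = x := by
    intro x
    rw [← pow_mul]
    have hqq' : q * q = Fintype.card K := by rw [hK]; ring
    rw [hqq']; exact FiniteField.pow_card x
  have htau : τ ^ q ≠ τ := fun h => hτF (fixed_mem_range' hq hffix τ h)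
  have htau' : τ ^ q - τ ≠ 0 := sub_ne_zero.mpr htau
  have htau'' : τ - τ ^ q ≠ 0 := sub_ne_zero.mpr (Ne.symm htau)
  -- additivity of the coordinate maps
  have hcadd : ∀ x y : K, c0 (x + y) = c0 x + c0 y ∧ c1 (x + y) = c1 x + c1 y := by
    intro x y
    have h0 := coords_zero' hτF (c0 (x + y) - c0 x - c0 y) (c1 (x + y) - c1 x - c1 y) (by
      rw [map_sub, map_sub, map_sub, map_sub]
      linear_combination hc x + hc y - hc (x + y))
    exact ⟨by linear_combination h0.1, by linear_combination h0.2⟩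
  have hcq : ∀ x : K, algebraMap F K (c0 x) + algebraMap F K (c1 x) * τ ^ q = x ^ q := by
    intro x
    conv_rhs => rw [hc x]
    rw [hfadd, mul_pow, hffix, hffix]
  -- structure of M
  have mulVec3 : ∀ (A : Matrix (Fin 3) (Fin 3) K) (v : Fin 3 → K) (j : Fin 3),
      (A.mulVec v) j = A j 0 * v 0 + A j 1 * v 1 + A j 2 * v 2 := by
    intro A v j; simp [Matrix.mulVec, dotProduct, Fin.sum_univ_three]
  have hMrow2 : ∀ v : Fin 3 → K, v ≠ 0 → v 2 = 0 → (M.mulVec v) 2 = 0 := by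
    intro v hv hv2
    have hMv : M.mulVec v ≠ 0 := by
      intro h0
      exact hv (mulVec_inj M hMdet (by rw [h0, Matrix.mulVec_zero]))
    have hmem : Projectivization.mk K (M.mulVec v) hMv ∈ linf K := by
      rw [← hMlinf]; exact ⟨v, ⟨hv, hv2⟩, hMv, rfl⟩
    obtain ⟨a, ha⟩ := exists_unit_rep (M.mulVec v) hMv
    have h2 : (Projectivization.mk K (M.mulVec v) hMv).rep 2 = 0 := hmem
    rw [ha] at h2
    simpa [a.ne_zero] using h2
  have hM20 : M 2 0 = 0 := by
    have := hMrow2 ![1,0,0] (by intro h; simpa using congrFun h 0) (by simp)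
    simpa [mulVec3] using this
  have hM21 : M 2 1 = 0 := by
    have := hMrow2 ![0,1,0] (by intro h; simpa using congrFun h 1) (by simp)
    simpa [mulVec3] using this
  have hdetM : M.det = M 2 2 * (M 0 0 * M 1 1 - M 0 1 * M 1 0) := by
    rw [Matrix.det_fin_three, hM20, hM21]; ring
  have hMne : M.det ≠ 0 := hMdet.ne_zero
  have hM22 : M 2 2 ≠ 0 := fun h => hMne (by rw [hdetM, h, zero_mul])
  have hdetN : M 0 0 * M 1 1 - M 0 1 * M 1 0 ≠ 0 := fun h => hMne (by rw [hdetM, h, mul_zero])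
  -- the conjugacy data, in coordinates
  have hpt2 : ∀ t : Option K, ptInfVec (K := K) t 2 = 0 := by
    intro t; cases t <;> simp [ptInfVec]
  obtain ⟨uP, huP⟩ : ∃ a : Kˣ, (a : K) • M.mulVec P0.rep = ptInfVec tP := by
    have h := hP
    unfold ptInf pmap at h
    rw [Projectivization.mk_eq_mk_iff] at h
    obtain ⟨a, ha⟩ := h
    exact ⟨a, by rw [← ha]; simp [Units.smul_def]⟩
  have hs2 : P0.rep 2 = 0 := by
    have h2 := congrFun huP 2
    rw [hpt2 tP] at h2
    simp only [Pi.smul_apply, smul_eq_mul, mulVec3 M P0.rep 2, hM20, hM21] at h2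
    rcases mul_eq_zero.mp h2 with h | h
    · exact absurd h uP.ne_zero
    · have h' : M 2 2 * P0.rep 2 = 0 := by linear_combination h
      exact (mul_eq_zero.mp h').resolve_left hM22
  have hPa0 : ptInfVec tP 0 = (uP : K) * (M 0 0 * P0.rep 0 + M 0 1 * P0.rep 1) := by
    have h0 := congrFun huP 0
    simp only [Pi.smul_apply, smul_eq_mul, mulVec3 M P0.rep 0] at h0
    rw [← h0, hs2]; ring
  have hPa1 : ptInfVec tP 1 = (uP : K) * (M 1 0 * P0.rep 0 + M 1 1 * P0.rep 1) := by
    have h0 := congrFun huP 1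
    simp only [Pi.smul_apply, smul_eq_mul, mulVec3 M P0.rep 1] at h0
    rw [← h0, hs2]; ring
  have hfrne : (fun i => P0.rep i ^ q) ≠ (0 : Fin 3 → K) := by
    intro h0
    apply P0.rep_nonzero
    funext i
    have h1 := congrFun h0 i
    simpa using pow_eq_zero_iff hqne |>.mp h1
  obtain ⟨uQ1, huQ1⟩ : ∃ a : Kˣ, (a : K) • M.mulVec ((frobPt q P0).rep) = ptInfVec tQ := by
    have h := hQ
    unfold ptInf pmap at h
    rw [Projectivization.mk_eq_mk_iff] at h
    obtain ⟨a, ha⟩ := h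
    exact ⟨a, by rw [← ha]; simp [Units.smul_def]⟩
  obtain ⟨uF, huF⟩ := exists_unit_rep (fun i => P0.rep i ^ q) hfrne
  have hrepF : (frobPt q P0).rep = (uF : K) • (fun i => P0.rep i ^ q) := huF
  have huQ : ((uQ1 * uF : Kˣ) : K) • M.mulVec (fun i => P0.rep i ^ q) = ptInfVec tQ := by
    rw [← huQ1, hrepF, Matrix.mulVec_smul, smul_smul]
    norm_num [mul_comm]
  set uQ : Kˣ := uQ1 * uF with huQdef
  have hQa0 : ptInfVec tQ 0 = (uQ : K) * (M 0 0 * P0.rep 0 ^ q + M 0 1 * P0.rep 1 ^ q) := by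
    have h0 := congrFun huQ 0
    simp only [Pi.smul_apply, smul_eq_mul, mulVec3] at h0
    rw [← h0, hs2, zero_pow hqne]; ring
  have hQa1 : ptInfVec tQ 1 = (uQ : K) * (M 1 0 * P0.rep 0 ^ q + M 1 1 * P0.rep 1 ^ q) := by
    have h0 := congrFun huQ 1
    simp only [Pi.smul_apply, smul_eq_mul, mulVec3] at h0
    rw [← h0, hs2, zero_pow hqne]; ring
  -- the Baer subplane machinery
  set MW : (Fin 3 → F) → (Fin 3 → K) := fun w => Mb.mulVec (algVec F w) with hMWdef
  have hMWadd : ∀ w w' : Fin 3 → F, MW (w + w') = MW w + MW w' := by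
    intro w w'
    show Mb.mulVec (algVec F (w + w')) = Mb.mulVec (algVec F w) + Mb.mulVec (algVec F w')
    have h1 : algVec F (w + w') = (algVec F w + algVec F w' : Fin 3 → K) := by
      funext i; simp [algVec, map_add]
    rw [h1, Matrix.mulVec_add]
  have hMW0 : ∀ w : Fin 3 → F, MW w ≠ 0 → w ≠ 0 := by
    intro w h hw
    apply h
    show Mb.mulVec (algVec F w) = 0
    have h1 : algVec F w = (0 : Fin 3 → K) := by funext i; simp [algVec, hw]
    rw [h1, Matrix.mulVec_zero]
  have hmemB : ∀ (w : Fin 3 → F) (h : MW w ≠ 0), Projectivization.mk K (MW w) h ∈ B := by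
    intro w h
    rw [hBeq]
    exact ⟨algVec F w, ⟨w, hMW0 w h, rfl⟩, h, rfl⟩
  have haff : ∀ (w : Fin 3 → F) (h2 : MW w 2 ≠ 0),
      (![c0 (MW w 0 / MW w 2), c1 (MW w 0 / MW w 2),
        c0 (MW w 1 / MW w 2), c1 (MW w 1 / MW w 2), 1] : Fin 5 → F) ∈ Wsub := by
    intro w h2
    have hne : MW w ≠ 0 := by intro h0; exact h2 (by rw [h0]; rfl)
    have hBm : Projectivization.mk K (MW w) hne ∈ B := hmemB w hne
    obtain ⟨aw, haw⟩ := exists_unit_rep (MW w) hne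
    have hnl : Projectivization.mk K (MW w) hne ∉ linf K := by
      intro hl
      have h3 : (Projectivization.mk K (MW w) hne).rep 2 = 0 := hl
      rw [haw] at h3
      exact h2 (by simpa [aw.ne_zero] using h3)
    have himg : bb c0 c1 (Projectivization.mk K (MW w) hne) ∈ ptsOf Wsub \ sinf F := by
      rw [← halpha]
      exact Set.mem_image_of_mem _ ⟨hBm, hnl⟩
    have hrep : (bb c0 c1 (Projectivization.mk K (MW w) hne)).rep ∈ Wsub := himg.1
    obtain ⟨af, haf⟩ := exists_unit_rep (bbVec c0 c1 (Projectivization.mk K (MW w) hne)) (by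
      intro h; have h4 := congrFun h 4; simp [bbVec] at h4)
    have haf' : (bb c0 c1 (Projectivization.mk K (MW w) hne)).rep
        = (af : F) • bbVec c0 c1 (Projectivization.mk K (MW w) hne) := haf
    rw [haf'] at hrep
    have hbv : bbVec c0 c1 (Projectivization.mk K (MW w) hne) ∈ Wsub :=
      (Submodule.smul_mem_iff Wsub af.ne_zero).mp hrep
    have h02 : (Projectivization.mk K (MW w) hne).rep 0 / (Projectivization.mk K (MW w) hne).rep 2
        = MW w 0 / MW w 2 := by
      rw [haw]
      simp only [Pi.smul_apply, smul_eq_mul]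
      exact mul_div_mul_left _ _ aw.ne_zero
    have h12 : (Projectivization.mk K (MW w) hne).rep 1 / (Projectivization.mk K (MW w) hne).rep 2
        = MW w 1 / MW w 2 := by
      rw [haw]
      simp only [Pi.smul_apply, smul_eq_mul]
      exact mul_div_mul_left _ _ aw.ne_zero
    have hfinal : bbVec c0 c1 (Projectivization.mk K (MW w) hne)
        = ![c0 (MW w 0 / MW w 2), c1 (MW w 0 / MW w 2),
            c0 (MW w 1 / MW w 2), c1 (MW w 1 / MW w 2), 1] := by
      unfold bbVec
      rw [h02, h12]
    rw [← hfinal]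
    exact hbv
  -- an affine point of B gives the normalising w'
  obtain ⟨Pp, hPpW, hPpS⟩ := Set.not_subset.mp hWns
  have hPp : Pp ∈ bb c0 c1 '' (B \ linf K) := by rw [halpha]; exact ⟨hPpW, hPpS⟩
  obtain ⟨pb, ⟨hpbB, hpbl⟩, hpbe⟩ := hPp
  rw [hBeq] at hpbB
  obtain ⟨v, ⟨w', hw'ne, rfl⟩, hvne, hpbeq⟩ := hpbB
  have hZ' : MW w' 2 ≠ 0 := by
    intro h0
    apply hpbl
    rw [hpbeq]
    obtain ⟨a, ha⟩ := exists_unit_rep (Mb.mulVec (algVec F w')) hvne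
    show (Projectivization.mk K (Mb.mulVec (algVec F w')) hvne).rep 2 = 0
    rw [ha]
    have h1 : Mb.mulVec (algVec F w') 2 = 0 := h0
    simp [h1]
  -- the key membership lemma: directions of α at points of b
  have dlem : ∀ (w : Fin 3 → F), MW w 2 = 0 →
      (![c0 (MW w 0 / MW w' 2), c1 (MW w 0 / MW w' 2),
        c0 (MW w 1 / MW w' 2), c1 (MW w 1 / MW w' 2), 0] : Fin 5 → F) ∈ Wsub := by
    intro w hw2
    have hws2 : MW (w + w') 2 = MW w' 2 := by
      rw [hMWadd]
      show MW w 2 + MW w' 2 = MW w' 2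
      rw [hw2, zero_add]
    have m1 := haff (w + w') (by rw [hws2]; exact hZ')
    have m2 := haff w' hZ'
    have hsub := Wsub.sub_mem m1 m2
    have hx : MW (w + w') 0 = MW w 0 + MW w' 0 := by rw [hMWadd]; rfl
    have hy : MW (w + w') 1 = MW w 1 + MW w' 1 := by rw [hMWadd]; rfl
    have e0 : c0 (MW (w + w') 0 / MW (w + w') 2) - c0 (MW w' 0 / MW w' 2)
        = c0 (MW w 0 / MW w' 2) := by
      rw [hws2, hx, add_div, (hcadd _ _).1]; ring
    have e1 : c1 (MW (w + w') 0 / MW (w + w') 2) - c1 (MW w' 0 / MW w' 2)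
        = c1 (MW w 0 / MW w' 2) := by
      rw [hws2, hx, add_div, (hcadd _ _).2]; ring
    have e2 : c0 (MW (w + w') 1 / MW (w + w') 2) - c0 (MW w' 1 / MW w' 2)
        = c0 (MW w 1 / MW w' 2) := by
      rw [hws2, hy, add_div, (hcadd _ _).1]; ring
    have e3 : c1 (MW (w + w') 1 / MW (w + w') 2) - c1 (MW w' 1 / MW w' 2)
        = c1 (MW w 1 / MW w' 2) := by
      rw [hws2, hy, add_div, (hcadd _ _).2]; ring
    have hveq : (![c0 (MW w 0 / MW w' 2), c1 (MW w 0 / MW w' 2),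
        c0 (MW w 1 / MW w' 2), c1 (MW w 1 / MW w' 2), 0] : Fin 5 → F)
        = ![c0 (MW (w + w') 0 / MW (w + w') 2), c1 (MW (w + w') 0 / MW (w + w') 2),
            c0 (MW (w + w') 1 / MW (w + w') 2), c1 (MW (w + w') 1 / MW (w + w') 2), 1]
          - ![c0 (MW w' 0 / MW w' 2), c1 (MW w' 0 / MW w' 2),
            c0 (MW w' 1 / MW w' 2), c1 (MW w' 1 / MW w' 2), 1] := by
      funext i
      fin_cases i <;> simp [e0, e1, e2, e3]
    rw [hveq]
    exact hsub
  -- points of the subline, pulled back to the subplane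
  have hgetw : ∀ sv : Fin 3 → K, sv ∈ sublineVecs F K → sv ≠ 0 →
      ∃ (w : Fin 3 → F) (k : Kˣ), MW w 2 = 0 ∧ (k : K) • M.mulVec sv = MW w := by
    intro sv hsv hsvne
    have hMsv : M.mulVec sv ≠ 0 := fun h0 =>
      hsvne (mulVec_inj M hMdet (by rw [h0, Matrix.mulVec_zero]))
    have hmem : Projectivization.mk K (M.mulVec sv) hMsv ∈ B ∩ linf K := by
      rw [hbsub]; exact ⟨sv, hsv, hMsv, rfl⟩
    have hmemL := hmem.2
    have hmemB2 := hmem.1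
    rw [hBeq] at hmemB2
    obtain ⟨v, ⟨w, hwne, rfl⟩, hvne2, heq⟩ := hmemB2
    rw [Projectivization.mk_eq_mk_iff] at heq
    obtain ⟨k, hk⟩ := heq
    have hk' : (k : K) • MW w = M.mulVec sv := by
      show (k : K) • Mb.mulVec (algVec F w) = M.mulVec sv
      rw [← hk]; simp [Units.smul_def]
    have h2 : (M.mulVec sv) 2 = 0 := by
      obtain ⟨a, ha⟩ := exists_unit_rep (M.mulVec sv) hMsv
      have h3 : (Projectivization.mk K (M.mulVec sv) hMsv).rep 2 = 0 := hmemL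
      rw [ha] at h3
      simpa [a.ne_zero] using h3
    have hw2 : MW w 2 = 0 := by
      have h3 := congrFun hk' 2
      rw [h2] at h3
      simp only [Pi.smul_apply, smul_eq_mul] at h3
      exact (mul_eq_zero.mp h3).resolve_left k.ne_zero
    refine ⟨w, k⁻¹, hw2, ?_⟩
    rw [← hk']
    rw [smul_smul, Units.val_inv_eq_inv_val, inv_mul_cancel₀ k.ne_zero, one_smul]
  have hsv1m : (![0,1,0] : Fin 3 → K) ∈ sublineVecs F K :=
    Set.mem_union_left _ ⟨0, by rw [map_zero]⟩
  have hsv2m : (![1,0,0] : Fin 3 → K) ∈ sublineVecs F K := Set.mem_union_right _ rfl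
  obtain ⟨w1, k1, hw12, hk1⟩ := hgetw ![0,1,0] hsv1m (by intro h; simpa using congrFun h 1)
  obtain ⟨w2, k2, hw22, hk2⟩ := hgetw ![1,0,0] hsv2m (by intro h; simpa using congrFun h 0)
  have hk1j : ∀ j : Fin 3, MW w1 j = (k1 : K) * M j 1 := by
    intro j
    have h := congrFun hk1 j
    simp only [Pi.smul_apply, smul_eq_mul, mulVec3] at h
    rw [← h]
    simp
  have hk2j : ∀ j : Fin 3, MW w2 j = (k2 : K) * M j 0 := by
    intro j
    have h := congrFun hk2 j
    simp only [Pi.smul_apply, smul_eq_mul, mulVec3] at h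
    rw [← h]
    simp
  have hsumne : MW (w1 + w2) ≠ 0 := by
    intro h0
    have h1 : M.mulVec ((k1 : K) • ![0,1,0] + (k2 : K) • ![1,0,0]) = M.mulVec 0 := by
      rw [Matrix.mulVec_add, Matrix.mulVec_smul, Matrix.mulVec_smul, hk1, hk2, ← hMWadd, h0,
        Matrix.mulVec_zero]
    have h2 := mulVec_inj M hMdet h1
    have h3 := congrFun h2 1
    simp at h3
  have hsum2 : MW (w1 + w2) 2 = 0 := by
    rw [hMWadd]
    show MW w1 2 + MW w2 2 = 0
    rw [hw12, hw22, add_zero]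
  have hsumB : Projectivization.mk K (MW (w1 + w2)) hsumne ∈ B ∩ linf K := by
    refine ⟨hmemB _ _, ?_⟩
    obtain ⟨a, ha⟩ := exists_unit_rep (MW (w1 + w2)) hsumne
    show (Projectivization.mk K (MW (w1 + w2)) hsumne).rep 2 = 0
    rw [ha]
    simp [hsum2]
  rw [hbsub] at hsumB
  obtain ⟨sv3, hsv3, hsv3ne, heq3⟩ := hsumB
  rw [Projectivization.mk_eq_mk_iff] at heq3
  obtain ⟨k3, hk30⟩ := heq3
  have hk3 : (k3 : K) • M.mulVec sv3 = MW (w1 + w2) := by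
    rw [← hk30]; simp [Units.smul_def]
  simp only [sublineVecs, Set.mem_union, Set.mem_setOf_eq, Set.mem_singleton_iff] at hsv3
  rcases hsv3 with ⟨θ, rfl⟩ | rfl
  · -- main case
    have hj : ∀ j : Fin 3,
        (k3 : K) * (M j 0 * algebraMap F K θ + M j 1) = (k1 : K) * M j 1 + (k2 : K) * M j 0 := by
      intro j
      have h := congrFun hk3 j
      simp only [Pi.smul_apply, smul_eq_mul, mulVec3] at h
      have h2 : MW (w1 + w2) j = MW w1 j + MW w2 j := by rw [hMWadd]; rfl
      rw [h2, hk1j, hk2j] at h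
      rw [← h]
      simp
      try ring
    have hkk1 : (k1 : K) = k3 := by
      have h' : ((k3 : K) - k1) * (M 0 0 * M 1 1 - M 0 1 * M 1 0) = 0 := by
        linear_combination M 0 0 * hj 1 - M 1 0 * hj 0
      have := (mul_eq_zero.mp h').resolve_right hdetN
      linear_combination -this
    have hkk2 : (k2 : K) = (k3 : K) * algebraMap F K θ := by
      have h' : ((k3 : K) * algebraMap F K θ - k2) * (M 0 0 * M 1 1 - M 0 1 * M 1 0) = 0 := by
        linear_combination M 1 1 * hj 0 - M 0 1 * hj 1
      have := (mul_eq_zero.mp h').resolve_right hdetN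
      linear_combination -this
    have hθne : algebraMap F K θ ≠ 0 := by
      intro h0
      rw [h0, mul_zero] at hkk2
      exact k2.ne_zero hkk2
    -- the key construction
    have key : ∀ (ta tb : Option K) (sa0 sa1 : K) (ua ub : Kˣ),
        ptInfVec ta 0 = (ua : K) * (M 0 0 * sa0 + M 0 1 * sa1) →
        ptInfVec ta 1 = (ua : K) * (M 1 0 * sa0 + M 1 1 * sa1) →
        ptInfVec tb 0 = (ub : K) * (M 0 0 * sa0 ^ q + M 0 1 * sa1 ^ q) →
        ptInfVec tb 1 = (ub : K) * (M 1 0 * sa0 ^ q + M 1 1 * sa1 ^ q) →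
        (lineTh (gpt τ q ta) (gqpt τ q tb) ∩ ptsOf (extSub F Wsub)).Nonempty := by
      intro ta tb sa0 sa1 ua ub ha0 ha1 hb0 hb1
      set d1 : Fin 5 → F := ![c0 (MW w1 0 / MW w' 2), c1 (MW w1 0 / MW w' 2),
        c0 (MW w1 1 / MW w' 2), c1 (MW w1 1 / MW w' 2), 0] with hd1
      set d2 : Fin 5 → F := ![c0 (MW w2 0 / MW w' 2), c1 (MW w2 0 / MW w' 2),
        c0 (MW w2 1 / MW w' 2), c1 (MW w2 1 / MW w' 2), 0] with hd2
      have hd1W : d1 ∈ Wsub := dlem w1 hw12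
      have hd2W : d2 ∈ Wsub := dlem w2 hw22
      set ζ : Fin 5 → K := sa1 • algVec F d1 + (sa0 / algebraMap F K θ) • algVec F d2 with hζ
      have hζext : ζ ∈ extSub F Wsub := by
        apply Submodule.add_mem
        · exact Submodule.smul_mem _ _ (Submodule.subset_span ⟨d1, hd1W, rfl⟩)
        · exact Submodule.smul_mem _ _ (Submodule.subset_span ⟨d2, hd2W, rfl⟩)
      have hζc : ∀ i : Fin 5, ζ i = sa1 * algebraMap F K (d1 i)
          + (sa0 / algebraMap F K θ) * algebraMap F K (d2 i) := by
        intro i; simp [hζ, algVec]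
      -- scalar values
      have hS0 : sa1 * MW w1 0 + (sa0 / algebraMap F K θ) * MW w2 0
          = (k3 : K) * (M 0 0 * sa0 + M 0 1 * sa1) := by
        rw [hk1j 0, hk2j 0, hkk1, hkk2]
        field_simp
        ring
      have hS1 : sa1 * MW w1 1 + (sa0 / algebraMap F K θ) * MW w2 1
          = (k3 : K) * (M 1 0 * sa0 + M 1 1 * sa1) := by
        rw [hk1j 1, hk2j 1, hkk1, hkk2]
        field_simp
        ring
      have hT0 : sa1 * (MW w1 0) ^ q + (sa0 / algebraMap F K θ) * (MW w2 0) ^ q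
          = (k3 : K) ^ q * (M 0 0 ^ q * sa0 + M 0 1 ^ q * sa1) := by
        rw [hk1j 0, hk2j 0, hkk1, hkk2, mul_pow, mul_pow, mul_pow, hffix]
        field_simp
        ring
      have hT1 : sa1 * (MW w1 1) ^ q + (sa0 / algebraMap F K θ) * (MW w2 1) ^ q
          = (k3 : K) ^ q * (M 1 0 ^ q * sa0 + M 1 1 ^ q * sa1) := by
        rw [hk1j 1, hk2j 1, hkk1, hkk2, mul_pow, mul_pow, mul_pow, hffix]
        field_simp
        ring
      have hb0q : (ptInfVec tb 0) ^ q = (ub : K) ^ q * (M 0 0 ^ q * sa0 + M 0 1 ^ q * sa1) := by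
        rw [hb0, mul_pow, hfadd, mul_pow, mul_pow, hqq, hqq]
      have hb1q : (ptInfVec tb 1) ^ q = (ub : K) ^ q * (M 1 0 ^ q * sa0 + M 1 1 ^ q * sa1) := by
        rw [hb1, mul_pow, hfadd, mul_pow, mul_pow, hqq, hqq]
      -- the Φ-functionals of ζ
      have fA : ζ 0 + ζ 1 * τ
          = (sa1 * MW w1 0 + (sa0 / algebraMap F K θ) * MW w2 0) / MW w' 2 := by
        rw [hζc 0, hζc 1]
        have e1 := hc (MW w1 0 / MW w' 2)
        have e2 := hc (MW w2 0 / MW w' 2)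
        simp only [hd1, hd2, Matrix.cons_val_zero, Matrix.cons_val_one, Matrix.head_cons]
        linear_combination (-sa1) * e1 - (sa0 / algebraMap F K θ) * e2
      have fB : ζ 0 + ζ 1 * τ ^ q
          = (sa1 * (MW w1 0) ^ q + (sa0 / algebraMap F K θ) * (MW w2 0) ^ q) / (MW w' 2) ^ q := by
        rw [hζc 0, hζc 1]
        have e1 := hcq (MW w1 0 / MW w' 2)
        have e2 := hcq (MW w2 0 / MW w' 2)
        rw [div_pow] at e1 e2
        simp only [hd1, hd2, Matrix.cons_val_zero, Matrix.cons_val_one, Matrix.head_cons]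
        linear_combination sa1 * e1 + (sa0 / algebraMap F K θ) * e2
      have fC : ζ 2 + ζ 3 * τ
          = (sa1 * MW w1 1 + (sa0 / algebraMap F K θ) * MW w2 1) / MW w' 2 := by
        rw [hζc 2, hζc 3]
        have e1 := hc (MW w1 1 / MW w' 2)
        have e2 := hc (MW w2 1 / MW w' 2)
        simp only [hd1, hd2]
        norm_num [show ∀ a b c d e : F, (![a, b, c, d, e] : Fin 5 → F) 2 = c from fun _ _ _ _ _ => rfl,
          show ∀ a b c d e : F, (![a, b, c, d, e] : Fin 5 → F) 3 = d from fun _ _ _ _ _ => rfl]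
        linear_combination (-sa1) * e1 - (sa0 / algebraMap F K θ) * e2
      have fD : ζ 2 + ζ 3 * τ ^ q
          = (sa1 * (MW w1 1) ^ q + (sa0 / algebraMap F K θ) * (MW w2 1) ^ q) / (MW w' 2) ^ q := by
        rw [hζc 2, hζc 3]
        have e1 := hcq (MW w1 1 / MW w' 2)
        have e2 := hcq (MW w2 1 / MW w' 2)
        rw [div_pow] at e1 e2
        simp only [hd1, hd2]
        norm_num [show ∀ a b c d e : F, (![a, b, c, d, e] : Fin 5 → F) 2 = c from fun _ _ _ _ _ => rfl,
          show ∀ a b c d e : F, (![a, b, c, d, e] : Fin 5 → F) 3 = d from fun _ _ _ _ _ => rfl]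
        linear_combination sa1 * e1 + (sa0 / algebraMap F K θ) * e2
      have f4 : ζ 4 = 0 := by
        rw [hζc 4]
        simp [hd1, hd2]
      -- the Φ-functionals of the target vectors
      have gA0 : gptVec τ q ta 0 + gptVec τ q ta 1 * τ = (τ ^ q - τ) * ptInfVec ta 0 := by
        cases ta <;> simp [gptVec, A0v, A1v, ptInfVec] <;> try ring
      have gA1 : gptVec τ q ta 0 + gptVec τ q ta 1 * τ ^ q = 0 := by
        cases ta <;> simp [gptVec, A0v, A1v] <;> try ring
      have gA2 : gptVec τ q ta 2 + gptVec τ q ta 3 * τ = (τ ^ q - τ) * ptInfVec ta 1 := by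
        cases ta <;> simp [gptVec, A0v, A1v, ptInfVec] <;> try ring
      have gA3 : gptVec τ q ta 2 + gptVec τ q ta 3 * τ ^ q = 0 := by
        cases ta <;> simp [gptVec, A0v, A1v] <;> try ring
      have gA4 : gptVec τ q ta 4 = 0 := by
        cases ta <;> simp [gptVec, A0v, A1v]
      have gB0 : gqptVec τ q tb 0 + gqptVec τ q tb 1 * τ = 0 := by
        cases tb <;> simp [gqptVec, B0v, B1v] <;> try ring
      have gB1 : gqptVec τ q tb 0 + gqptVec τ q tb 1 * τ ^ q
          = (τ - τ ^ q) * (ptInfVec tb 0) ^ q := by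
        cases tb <;> simp [gqptVec, B0v, B1v, ptInfVec] <;> try ring
      have gB2 : gqptVec τ q tb 2 + gqptVec τ q tb 3 * τ = 0 := by
        cases tb <;> simp [gqptVec, B0v, B1v] <;> try ring
      have gB3 : gqptVec τ q tb 2 + gqptVec τ q tb 3 * τ ^ q
          = (τ - τ ^ q) * (ptInfVec tb 1) ^ q := by
        cases tb <;> simp [gqptVec, B0v, B1v, ptInfVec, zero_pow hqne] <;> try ring
      have gB4 : gqptVec τ q tb 4 = 0 := by
        cases tb <;> simp [gqptVec, B0v, B1v]
      set lam : K := (k3 : K) / ((ua : K) * MW w' 2 * (τ ^ q - τ)) with hlam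
      set mu : K := (k3 : K) ^ q / ((ub : K) ^ q * (MW w' 2) ^ q * (τ - τ ^ q)) with hmu
      set ρ : Fin 5 → K := lam • gptVec τ q ta + mu • gqptVec τ q tb with hρ
      have hρc : ∀ i, ρ i = lam * gptVec τ q ta i + mu * gqptVec τ q tb i := by
        intro i; simp [hρ]
      have hR1 : ρ 0 + ρ 1 * τ = lam * ((τ ^ q - τ) * ptInfVec ta 0) := by
        rw [hρc 0, hρc 1]; linear_combination lam * gA0 + mu * gB0
      have hR2 : ρ 0 + ρ 1 * τ ^ q = mu * ((τ - τ ^ q) * (ptInfVec tb 0) ^ q) := by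
        rw [hρc 0, hρc 1]; linear_combination lam * gA1 + mu * gB1
      have hR3 : ρ 2 + ρ 3 * τ = lam * ((τ ^ q - τ) * ptInfVec ta 1) := by
        rw [hρc 2, hρc 3]; linear_combination lam * gA2 + mu * gB2
      have hR4 : ρ 2 + ρ 3 * τ ^ q = mu * ((τ - τ ^ q) * (ptInfVec tb 1) ^ q) := by
        rw [hρc 2, hρc 3]; linear_combination lam * gA3 + mu * gB3
      have hR5 : ρ 4 = 0 := by
        rw [hρc 4, gA4, gB4]; ring
      have E1 : ζ 0 + ζ 1 * τ = ρ 0 + ρ 1 * τ := by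
        rw [fA, hR1, hS0, ha0, hlam]
        field_simp
      have E2 : ζ 0 + ζ 1 * τ ^ q = ρ 0 + ρ 1 * τ ^ q := by
        rw [fB, hR2, hT0, hb0q, hmu]
        field_simp
      have E3 : ζ 2 + ζ 3 * τ = ρ 2 + ρ 3 * τ := by
        rw [fC, hR3, hS1, ha1, hlam]
        field_simp
      have E4 : ζ 2 + ζ 3 * τ ^ q = ρ 2 + ρ 3 * τ ^ q := by
        rw [fD, hR4, hT1, hb1q, hmu]
        field_simp
      have hζρ : ζ = ρ := by
        have h01 := pair_eq' htau E1 E2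
        have h23 := pair_eq' htau E3 E4
        funext i
        fin_cases i
        · exact h01.1
        · exact h01.2
        · exact h23.1
        · exact h23.2
        · show ζ 4 = ρ 4
          rw [hR5]; exact f4
      have hζne : ζ ≠ 0 := by
        intro h0
        have hz0 : ptInfVec ta 0 = 0 := by
          have hA := fA
          rw [h0, hS0] at hA
          simp only [Pi.zero_apply, zero_mul, zero_add, add_zero] at hA
          have hA' := hA.symm
          rw [div_eq_zero_iff] at hA'
          have hX : M 0 0 * sa0 + M 0 1 * sa1 = 0 := by
            rcases hA' with h | h
            · exact (mul_eq_zero.mp h).resolve_left k3.ne_zero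
            · exact absurd h hZ'
          rw [ha0, hX, mul_zero]
        have hz1 : ptInfVec ta 1 = 0 := by
          have hA := fC
          rw [h0, hS1] at hA
          simp only [Pi.zero_apply, zero_mul, zero_add, add_zero] at hA
          have hA' := hA.symm
          rw [div_eq_zero_iff] at hA'
          have hX : M 1 0 * sa0 + M 1 1 * sa1 = 0 := by
            rcases hA' with h | h
            · exact (mul_eq_zero.mp h).resolve_left k3.ne_zero
            · exact absurd h hZ'
          rw [ha1, hX, mul_zero]
        apply ptInfVec_ne ta
        funext i
        fin_cases i
        · exact hz0
        · exact hz1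
        · exact hpt2 ta
      refine ⟨Projectivization.mk K ζ hζne, ?_, ?_⟩
      · show (Projectivization.mk K ζ hζne).rep
            ∈ Submodule.span K {(gpt τ q ta).rep, (gqpt τ q tb).rep}
        obtain ⟨az, haz⟩ := exists_unit_rep ζ hζne
        obtain ⟨ag, hag⟩ := exists_unit_rep (gptVec τ q ta) (gptVec_ne τ q ta)
        obtain ⟨aq, haq⟩ := exists_unit_rep (gqptVec τ q tb) (gqptVec_ne τ q tb)
        have hag' : (gpt τ q ta).rep = (ag : K) • gptVec τ q ta := hag
        have haq' : (gqpt τ q tb).rep = (aq : K) • gqptVec τ q tb := haq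
        have hg : gptVec τ q ta = ((ag : K)⁻¹) • (gpt τ q ta).rep := by
          rw [hag', smul_smul, inv_mul_cancel₀ ag.ne_zero, one_smul]
        have hqv : gqptVec τ q tb = ((aq : K)⁻¹) • (gqpt τ q tb).rep := by
          rw [haq', smul_smul, inv_mul_cancel₀ aq.ne_zero, one_smul]
        rw [haz, hζρ, hρ, hg, hqv]
        apply Submodule.smul_mem
        apply Submodule.add_mem
        · exact Submodule.smul_mem _ _ (Submodule.smul_mem _ _
            (Submodule.subset_span (Set.mem_insert _ _)))
        · exact Submodule.smul_mem _ _ (Submodule.smul_mem _ _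
            (Submodule.subset_span (Set.mem_insert_of_mem _ rfl)))
      · show (Projectivization.mk K ζ hζne).rep ∈ extSub F Wsub
        obtain ⟨az, haz⟩ := exists_unit_rep ζ hζne
        rw [haz]
        exact Submodule.smul_mem _ _ hζext
    constructor
    · exact key tP tQ (P0.rep 0) (P0.rep 1) uP uQ hPa0 hPa1 hQa0 hQa1
    · have h2 := key tQ tP (P0.rep 0 ^ q) (P0.rep 1 ^ q) uQ uP hQa0 hQa1
        (by rw [hqq (P0.rep 0), hqq (P0.rep 1)]; exact hPa0)
        (by rw [hqq (P0.rep 0), hqq (P0.rep 1)]; exact hPa1)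
      have hsymm : lineTh (gqpt τ q tP) (gpt τ q tQ) = lineTh (gpt τ q tQ) (gqpt τ q tP) := by
        unfold lineTh
        rw [Set.pair_comm]
      rw [hsymm]
      exact h2
  · -- degenerate case is impossible
    have hj : ∀ j : Fin 3, (k3 : K) * M j 0 = (k1 : K) * M j 1 + (k2 : K) * M j 0 := by
      intro j
      have h := congrFun hk3 j
      simp only [Pi.smul_apply, smul_eq_mul, mulVec3] at h
      have h2 : MW (w1 + w2) j = MW w1 j + MW w2 j := by rw [hMWadd]; rfl
      rw [h2, hk1j, hk2j] at h
      rw [← h]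
      simp
    have h' : (k1 : K) * (M 0 0 * M 1 1 - M 0 1 * M 1 0) = 0 := by
      linear_combination M 1 0 * hj 0 - M 0 0 * hj 1
    exact absurd ((mul_eq_zero.mp h').resolve_right hdetN) k1.ne_zero

end BaerConics
end
end

section
/- Let f be a quadratic form over K = GF(q²) whose zero set in PG(2,q²) is an F_{q²}-conic 𝒪, and write f = f∞ + τ·f₀ in Bruck–Bose coordinates. For t ∈ F = GF(q) set f_t = t·f∞ + f₀, and set f_∞ = f∞. Then for every t ∈ F ∪ {∞}, the number of points of the transversal line g that lie on the quadric {f_t = 0} of PG(4,q²) equals |𝒪 ∩ ℓ∞| (which is 0, 1 or 2). -/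
open scoped Classical
open Matrix

noncomputable section

namespace BaerConics

variable {K : Type} [Field K] {m n : ℕ}

/-- The Bruck-Bose substitution `(x₀,x₁,y₀,y₁,z) ↦ (x₀+x₁τ, y₀+y₁τ, z)`. -/
def bbSubst (F : Type) {K : Type} [Field F] [Field K] [Algebra F K] (τ : K)
    (v : Fin 5 → F) : Fin 3 → K :=
  ![algebraMap F K (v 0) + algebraMap F K (v 1) * τ,
    algebraMap F K (v 2) + algebraMap F K (v 3) * τ,
    algebraMap F K (v 4)]


/-! ### Auxiliary lemmas for `statement_8` -/

section Statement8Aux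

variable {K : Type} [Field K] {n : ℕ}

lemma qeval_smul' (M : Matrix (Fin n) (Fin n) K) (c : K) (v : Fin n → K) :
    qeval M (c • v) = c ^ 2 * qeval M v := by
  simp only [qeval, Matrix.mulVec_smul, smul_dotProduct, dotProduct_smul, smul_eq_mul]
  ring

lemma qeval_addM (A B : Matrix (Fin n) (Fin n) K) (v : Fin n → K) :
    qeval (A + B) v = qeval A v + qeval B v := by
  simp [qeval, Matrix.add_mulVec, dotProduct_add]

lemma qeval_subM (A B : Matrix (Fin n) (Fin n) K) (v : Fin n → K) :
    qeval (A - B) v = qeval A v - qeval B v := by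
  simp [qeval, Matrix.sub_mulVec, dotProduct_sub]

lemma qeval_smulM (c : K) (A : Matrix (Fin n) (Fin n) K) (v : Fin n → K) :
    qeval (c • A) v = c * qeval A v := by
  simp [qeval, Matrix.smul_mulVec, dotProduct_smul]

lemma qeval_map {L : Type} [Field L] (σ : K →+* L) (A : Matrix (Fin n) (Fin n) K)
    (v : Fin n → K) : qeval (A.map σ) (fun i => σ (v i)) = σ (qeval A v) := by
  simp only [qeval, Matrix.mulVec, dotProduct, Matrix.map_apply, map_sum, _root_.map_mul]

lemma qeval_alt (N : Matrix (Fin n) (Fin n) K)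
    (hdiag : ∀ i, N i i = 0) (hoff : ∀ i j, N i j + N j i = 0) (w : Fin n → K) :
    qeval N w = 0 := by
  have h : qeval N w = ∑ p ∈ (Finset.univ ×ˢ Finset.univ : Finset (Fin n × Fin n)),
      w p.1 * (N p.1 p.2 * w p.2) := by
    rw [Finset.sum_product]
    simp [qeval, dotProduct, Matrix.mulVec, Finset.mul_sum]
  rw [h]
  refine Finset.sum_involution (fun p _ => (p.2, p.1)) ?_ ?_ (fun p hp => by simp)
    (fun p hp => rfl)
  · intro p _
    have := hoff p.1 p.2
    simp only
    linear_combination (w p.1 * w p.2) * this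
  · intro p _ hne hc
    have h1 : p.2 = p.1 := congrArg Prod.fst hc
    exact hne (by rw [h1, hdiag]; ring)

lemma qeval_ext {F : Type} [Field F] [Algebra F K] (N : Matrix (Fin n) (Fin n) K)
    (h : ∀ v : Fin n → F, qeval N (algVec F v) = 0) (w : Fin n → K) : qeval N w = 0 := by
  have hsingle : ∀ i : Fin n, algVec F (Pi.single i (1:F)) = Pi.single i (1:K) := by
    intro i; funext j
    simp [algVec, Pi.single_apply, apply_ite (algebraMap F K)]
  have hdiag : ∀ i, N i i = 0 := by
    intro i
    have := h (Pi.single i 1)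
    rw [hsingle] at this
    simpa [qeval, mulVec_single, dotProduct_single] using this
  have hoff : ∀ i j, N i j + N j i = 0 := by
    intro i j
    rcases eq_or_ne i j with rfl | hij
    · rw [hdiag]; ring
    · have := h (Pi.single i 1 + Pi.single j 1)
      have hadd : algVec F (Pi.single i (1:F) + Pi.single j (1:F))
          = (Pi.single i (1:K) + Pi.single j (1:K) : Fin n → K) := by
        funext k; simp [algVec, Pi.single_apply, apply_ite (algebraMap F K)]
      rw [hadd] at this
      simpa [qeval, Matrix.mulVec_add, mulVec_single, dotProduct_add, add_dotProduct,
        dotProduct_single, single_dotProduct, Pi.single_apply, hij, hij.symm, hdiag,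
        add_comm (N j i) (N i j)] using this
  exact qeval_alt N hdiag hoff w

/-- Frobenius ring hom `x ↦ x ^ q` on `K`. -/
lemma exists_frob {F K : Type} [Field F] [Field K] [Fintype F] [Algebra F K]
    (q : ℕ) (hq : Fintype.card F = q) : ∃ σ : K →+* K, ∀ x : K, σ x = x ^ q := by
  obtain ⟨n, hp, hcard⟩ := FiniteField.card F (ringChar F)
  have hprime : Fact (Nat.Prime (ringChar F)) := ⟨hp⟩
  have hKchar : CharP K (ringChar F) :=
    charP_of_injective_ringHom (algebraMap F K).injective (ringChar F)
  have : ExpChar K (ringChar F) := ExpChar.prime hp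
  refine ⟨iterateFrobenius K (ringChar F) n, fun x => ?_⟩
  rw [iterateFrobenius_def, ← hcard, hq]

/-- Fixed points of `x ↦ x ^ q` on `K` lie in the image of `F`. -/
lemma fix_mem_range {F K : Type} [Field F] [Field K] [Fintype F] [Algebra F K]
    (q : ℕ) (hq : Fintype.card F = q) (x : K) (hx : x ^ q = x) :
    x ∈ Set.range (algebraMap F K) := by
  have h2 : 2 ≤ q := hq ▸ Fintype.one_lt_card
  set P : Polynomial K := Polynomial.X ^ q - Polynomial.X with hP
  have hdeg : P.natDegree = q := by
    rw [hP, Polynomial.natDegree_sub_eq_left_of_natDegree_lt, Polynomial.natDegree_X_pow]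
    rw [Polynomial.natDegree_X, Polynomial.natDegree_X_pow]
    omega
  have hP0 : P ≠ 0 := by
    intro h
    rw [h, Polynomial.natDegree_zero] at hdeg
    omega
  have hroot : ∀ y : K, y ^ q = y → y ∈ P.roots.toFinset := by
    intro y hy
    simp only [Multiset.mem_toFinset, Polynomial.mem_roots hP0, Polynomial.IsRoot.def, hP]
    simp [hy]
    rw [← hP]; exact hP0
  set S : Finset K := Finset.univ.image (algebraMap F K) with hS
  have hSsub : S ⊆ P.roots.toFinset := by
    intro y hy
    simp only [hS, Finset.mem_image] at hy
    obtain ⟨a, -, rfl⟩ := hy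
    apply hroot
    rw [← map_pow]
    congr 1
    rw [← hq]
    exact FiniteField.pow_card a
  have hScard : S.card = q := by
    rw [hS, Finset.card_image_of_injective _ (algebraMap F K).injective,
      Finset.card_univ, hq]
  have hTcard : P.roots.toFinset.card ≤ q := by
    calc P.roots.toFinset.card ≤ Multiset.card P.roots := Multiset.toFinset_card_le _
    _ ≤ P.natDegree := Polynomial.card_roots' P
    _ = q := hdeg
  have hST : S = P.roots.toFinset :=
    Finset.eq_of_subset_of_card_le hSsub (by omega)
  have := hroot x hx
  rw [← hST] at this
  simp only [hS, Finset.mem_image] at this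
  obtain ⟨a, -, rfl⟩ := this
  exact ⟨a, rfl⟩

/-- The Bruck-Bose substitution as a matrix. -/
def bbL {K : Type} [Field K] (τ : K) : Matrix (Fin 3) (Fin 5) K :=
  ![![1, τ, 0, 0, 0], ![0, 0, 1, τ, 0], ![0, 0, 0, 0, 1]]

lemma bbL_mulVec (τ : K) (w : Fin 5 → K) :
    (bbL τ).mulVec w = ![w 0 + w 1 * τ, w 2 + w 3 * τ, w 4] := by
  funext i
  fin_cases i <;>
    simp [bbL, Matrix.mulVec, dotProduct, Fin.sum_univ_five] <;> ring

lemma qeval_conj (L : Matrix (Fin 3) (Fin 5) K) (M : Matrix (Fin 3) (Fin 3) K)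
    (w : Fin 5 → K) : qeval (Lᵀ * M * L) w = qeval M (L.mulVec w) := by
  rw [qeval, qeval, ← Matrix.mulVec_mulVec, ← Matrix.mulVec_mulVec,
    dotProduct_mulVec, vecMul_transpose]

lemma rep_mk_eq_smul {n : ℕ} (v : Fin n → K) (h : v ≠ 0) :
    ∃ c : K, c ≠ 0 ∧ (Projectivization.mk K v h).rep = c • v := by
  have h1 := Projectivization.mk_rep (Projectivization.mk K v h)
  rw [Projectivization.mk_eq_mk_iff'] at h1
  obtain ⟨c, hc⟩ := h1
  refine ⟨c, ?_, hc.symm⟩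
  intro h0
  apply (Projectivization.mk K v h).rep_nonzero
  rw [← hc, h0, zero_smul]

end Statement8Aux

/-- Each quadric `f_t = t f∞ + f₀` of the Bruck-Bose pencil of a nondegenerate conic `𝒪`
meets the transversal `g` in exactly `|𝒪 ∩ ℓ∞|` points. -/
theorem statement_8
    {F K : Type} [Field F] [Field K] [Fintype F] [Fintype K] [Algebra F K]
    (q : ℕ) (hq : Fintype.card F = q) (hK : Fintype.card K = q ^ 2)
    (τ : K) (t0 t1 : F)
    (hτ : τ ^ 2 = algebraMap F K t1 * τ + algebraMap F K t0)
    (hτF : τ ∉ Set.range (algebraMap F K))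
    (c0 c1 : K → F)
    (hc : ∀ x : K, x = algebraMap F K (c0 x) + algebraMap F K (c1 x) * τ)
    (M : Matrix (Fin 3) (Fin 3) K)
    (hO : IsFq2Conic {p : PP K 3 | qeval M p.rep = 0})
    (Minf M0 : Matrix (Fin 5) (Fin 5) F)
    (hdec : ∀ v : Fin 5 → F, qeval M (bbSubst F τ v) =
      algebraMap F K (qeval Minf v) + algebraMap F K (qeval M0 v) * τ) :
    ∀ t : Option F,
      {p : PP K 5 | p ∈ gline τ q ∧
        qeval ((t.elim Minf fun s => s • Minf + M0).map (algebraMap F K)) p.rep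
          = 0}.ncard
      = ({p : PP K 3 | qeval M p.rep = 0} ∩ linf K).ncard := by
  intro t
  classical
  obtain ⟨σ, hσ⟩ := exists_frob (F := F) (K := K) q hq
  have hσalg : ∀ a : F, σ (algebraMap F K a) = algebraMap F K a := by
    intro a
    rw [hσ, ← map_pow]
    congr 1
    rw [← hq]
    exact FiniteField.pow_card a
  have hKpow : ∀ x : K, (x ^ q) ^ q = x := by
    intro x
    rw [← pow_mul, ← pow_two, ← hK]
    exact FiniteField.pow_card x
  have hσσ : ∀ x : K, σ (σ x) = x := by
    intro x
    rw [hσ, hσ]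
    exact hKpow x
  have hτq : τ ^ q ≠ τ := fun h => hτF (fix_mem_range q hq τ h)
  have hτ0 : τ ≠ 0 := fun h => hτF ⟨0, by simp [h]⟩
  set d : K := τ ^ q - τ with hd_def
  have hd : d ≠ 0 := sub_ne_zero.mpr hτq
  set Mi : Matrix (Fin 5) (Fin 5) K := Minf.map (algebraMap F K) with hMi
  set Mz : Matrix (Fin 5) (Fin 5) K := M0.map (algebraMap F K) with hMz
  -- the decomposition identity over K
  have hLalg : ∀ v : Fin 5 → F, (bbL τ).mulVec (algVec F v) = bbSubst F τ v := by
    intro v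
    rw [bbL_mulVec]
    funext i
    fin_cases i <;> simp [algVec, bbSubst]
  have star : ∀ w : Fin 5 → K,
      qeval M ((bbL τ).mulVec w) = qeval Mi w + τ * qeval Mz w := by
    have hNv : ∀ v : Fin 5 → F,
        qeval ((bbL τ)ᵀ * M * bbL τ - Mi - τ • Mz) (algVec F v) = 0 := by
      intro v
      rw [qeval_subM, qeval_subM, qeval_conj, hLalg, qeval_smulM]
      have h1 : qeval Mi (algVec F v) = algebraMap F K (qeval Minf v) :=
        qeval_map (algebraMap F K) Minf v
      have h2 : qeval Mz (algVec F v) = algebraMap F K (qeval M0 v) :=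
        qeval_map (algebraMap F K) M0 v
      rw [h1, h2, hdec v]
      ring
    intro w
    have h0 := qeval_ext _ hNv w
    rw [qeval_subM, qeval_subM, qeval_conj, qeval_smulM] at h0
    linear_combination h0
  -- the conjugate decomposition identity
  have hMiσ : Mi.map σ = Mi := by
    ext i j
    simp [hMi, Matrix.map_apply, hσalg]
  have hMzσ : Mz.map σ = Mz := by
    ext i j
    simp [hMz, Matrix.map_apply, hσalg]
  have star' : ∀ w : Fin 5 → K,
      qeval Mi w + τ ^ q * qeval Mz w = qeval (M.map σ) ((bbL (τ ^ q)).mulVec w) := by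
    intro w
    have h1 := star (fun i => σ (w i))
    have h2 := congrArg σ h1
    rw [map_add, _root_.map_mul] at h2
    have e1 : σ (qeval M ((bbL τ).mulVec (fun i => σ (w i))))
        = qeval (M.map σ) ((bbL (τ ^ q)).mulVec w) := by
      rw [← qeval_map σ M]
      congr 1
      funext i
      rw [bbL_mulVec, bbL_mulVec]
      fin_cases i <;> simp [map_add, _root_.map_mul, hσσ, hσ τ]
    have e2 : σ (qeval Mi (fun i => σ (w i))) = qeval Mi w := by
      have h3 := qeval_map σ Mi (fun i => σ (w i))
      rw [hMiσ] at h3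
      rw [← h3]
      congr 1
      funext i
      exact hσσ (w i)
    have e3 : σ (qeval Mz (fun i => σ (w i))) = qeval Mz w := by
      have h3 := qeval_map σ Mz (fun i => σ (w i))
      rw [hMzσ] at h3
      rw [← h3]
      congr 1
      funext i
      exact hσσ (w i)
    rw [e1, e2, e3, hσ τ] at h2
    exact h2.symm
  -- explicit form of points of the transversal
  have hwcomp : ∀ a b : K,
      a • A0v τ q + b • A1v τ q = ![a * τ ^ q, -a, b * τ ^ q, -b, 0] := by
    intro a b
    funext i
    fin_cases i <;> simp [A0v, A1v] <;> ring
  have hbb1 : ∀ a b : K,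
      (bbL τ).mulVec (a • A0v τ q + b • A1v τ q) = d • ![a, b, 0] := by
    intro a b
    rw [hwcomp, bbL_mulVec]
    funext i
    fin_cases i <;> simp [hd_def] <;> ring
  have hbb2 : ∀ a b : K,
      (bbL (τ ^ q)).mulVec (a • A0v τ q + b • A1v τ q) = 0 := by
    intro a b
    rw [hwcomp, bbL_mulVec]
    funext i
    fin_cases i <;> simp <;> ring
  -- values of the two component forms on the transversal
  have hE2 : ∀ a b : K, qeval Mi (a • A0v τ q + b • A1v τ q)
      + τ ^ q * qeval Mz (a • A0v τ q + b • A1v τ q) = 0 := by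
    intro a b
    have h1 := star' (a • A0v τ q + b • A1v τ q)
    rw [hbb2 a b] at h1
    simpa [qeval] using h1
  have hQz : ∀ a b : K,
      qeval Mz (a • A0v τ q + b • A1v τ q) = -(d * qeval M ![a, b, 0]) := by
    intro a b
    have E1 : qeval Mi (a • A0v τ q + b • A1v τ q)
        + τ * qeval Mz (a • A0v τ q + b • A1v τ q)
        = d ^ 2 * qeval M ![a, b, 0] := by
      have h1 := star (a • A0v τ q + b • A1v τ q)
      rw [hbb1 a b, qeval_smul'] at h1
      linear_combination -h1
    have h3 : (-d) * qeval Mz (a • A0v τ q + b • A1v τ q)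
        = (-d) * (-(d * qeval M ![a, b, 0])) := by
      have hdd : τ - τ ^ q = -d := by rw [hd_def]; ring
      linear_combination E1 - hE2 a b
    exact mul_left_cancel₀ (neg_ne_zero.mpr hd) h3
  have hQi : ∀ a b : K,
      qeval Mi (a • A0v τ q + b • A1v τ q) = τ ^ q * (d * qeval M ![a, b, 0]) := by
    intro a b
    have h1 := hQz a b
    linear_combination hE2 a b - τ ^ q * h1
  -- the quadric of the pencil and its value on the transversal
  set Nt : Matrix (Fin 5) (Fin 5) K :=
    (t.elim Minf fun s => s • Minf + M0).map (algebraMap F K) with hNt_def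
  set coef : K := t.elim (τ ^ q * d) (fun s => algebraMap F K s * (τ ^ q * d) - d)
    with hcoef_def
  have hNt : ∀ a b : K,
      qeval Nt (a • A0v τ q + b • A1v τ q) = coef * qeval M ![a, b, 0] := by
    intro a b
    cases t with
    | none =>
        rw [hNt_def, hcoef_def]
        simp only [Option.elim]
        rw [← hMi, hQi a b]
        ring
    | some s =>
        rw [hNt_def, hcoef_def]
        simp only [Option.elim]
        have hsplit : ((s • Minf + M0).map (algebraMap F K))
            = algebraMap F K s • Mi + Mz := by
          ext i j
          simp only [hMi, hMz, Matrix.map_apply, Matrix.add_apply, Matrix.smul_apply,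
            map_add, _root_.map_mul, smul_eq_mul]
        rw [hsplit, qeval_addM, qeval_smulM, hQi a b, hQz a b]
        ring
  have hcoef : coef ≠ 0 := by
    cases t with
    | none =>
        rw [hcoef_def]
        simp only [Option.elim]
        exact mul_ne_zero (pow_ne_zero q hτ0) hd
    | some s =>
        rw [hcoef_def]
        simp only [Option.elim]
        intro h
        have h1 : algebraMap F K s * τ ^ q = 1 := by
          have h2 : d * (algebraMap F K s * τ ^ q - 1) = 0 := by linear_combination h
          rcases mul_eq_zero.mp h2 with h3 | h3
          · exact absurd h3 hd
          · linear_combination h3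
        have h4 : algebraMap F K s * τ = 1 := by
          have h5 := congrArg σ h1
          rw [_root_.map_mul, _root_.map_one, hσalg, hσ (τ ^ q), hKpow] at h5
          exact h5
        have h5 : algebraMap F K s ≠ 0 := by
          intro h0
          rw [h0, zero_mul] at h4
          exact zero_ne_one h4
        have h6 : τ ^ q = τ := by
          have h7 : algebraMap F K s * (τ ^ q - τ) = 0 := by linear_combination h1 - h4
          rcases mul_eq_zero.mp h7 with h8 | h8
          · exact absurd h8 h5
          · linear_combination h8
        exact hτq h6
  -- nonvanishing facts about transversal vectors
  have hw0 : ∀ a b : K, a • A0v τ q + b • A1v τ q = 0 → a = 0 ∧ b = 0 := by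
    intro a b h
    rw [hwcomp] at h
    constructor
    · have h1 := congrFun h 1
      simpa using h1
    · have h1 := congrFun h 3
      simpa using h1
  have hA0ne : A0v τ q ≠ 0 := by
    intro h
    have h1 := congrFun h 1
    simp [A0v] at h1
  have hrep3 : ∀ p : PP K 3, p.rep 2 = 0 → p.rep = ![p.rep 0, p.rep 1, (0:K)] := by
    intro p hp
    funext i
    fin_cases i <;> simp [hp]
  -- the bijection between the conic points at infinity and quadric points on g
  set G : PP K 3 → PP K 5 := fun p =>
    if h : p.rep 0 • A0v τ q + p.rep 1 • A1v τ q ≠ 0 then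
      Projectivization.mk K _ h
    else Projectivization.mk K (A0v τ q) hA0ne with hG_def
  have hbij : Set.BijOn G ({p : PP K 3 | qeval M p.rep = 0} ∩ linf K)
      {p : PP K 5 | p ∈ gline τ q ∧ qeval Nt p.rep = 0} := by
    refine ⟨?_, ?_, ?_⟩
    · -- maps to
      rintro p ⟨hp1, hp2⟩
      have hp2' : p.rep 2 = 0 := hp2
      have hwne : p.rep 0 • A0v τ q + p.rep 1 • A1v τ q ≠ 0 := by
        intro h
        obtain ⟨ha, hb⟩ := hw0 _ _ h
        apply p.rep_nonzero
        rw [hrep3 p hp2', ha, hb]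
        funext i
        fin_cases i <;> simp
      have hGp : G p = Projectivization.mk K _ hwne := by
        rw [hG_def]
        exact dif_pos hwne
      obtain ⟨c, hc0, hc⟩ := rep_mk_eq_smul _ hwne
      constructor
      · show (G p).rep ∈ Submodule.span K {A0v τ q, A1v τ q}
        rw [hGp, hc]
        rw [Submodule.mem_span_pair]
        exact ⟨c * p.rep 0, c * p.rep 1, by
          rw [smul_add, smul_smul, smul_smul]⟩
      · show qeval Nt (G p).rep = 0
        rw [hGp, hc, qeval_smul', hNt]
        have hval : qeval M ![p.rep 0, p.rep 1, 0] = 0 := by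
          rw [← hrep3 p hp2']
          exact hp1
        rw [hval]
        ring
    · -- injective
      rintro p ⟨hp1, hp2⟩ p' ⟨hp1', hp2'⟩ hGpp
      have hp2a : p.rep 2 = 0 := hp2
      have hp2a' : p'.rep 2 = 0 := hp2'
      have hwne : p.rep 0 • A0v τ q + p.rep 1 • A1v τ q ≠ 0 := by
        intro h
        obtain ⟨ha, hb⟩ := hw0 _ _ h
        apply p.rep_nonzero
        rw [hrep3 p hp2a, ha, hb]
        funext i
        fin_cases i <;> simp
      have hwne' : p'.rep 0 • A0v τ q + p'.rep 1 • A1v τ q ≠ 0 := by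
        intro h
        obtain ⟨ha, hb⟩ := hw0 _ _ h
        apply p'.rep_nonzero
        rw [hrep3 p' hp2a', ha, hb]
        funext i
        fin_cases i <;> simp
      rw [hG_def] at hGpp
      simp only [dif_pos hwne, dif_pos hwne'] at hGpp
      rw [Projectivization.mk_eq_mk_iff'] at hGpp
      obtain ⟨c, hc⟩ := hGpp
      have ha : p.rep 0 = c * p'.rep 0 := by
        have h1 := congrFun hc 1
        rw [hwcomp, hwcomp] at h1
        simp at h1
        linear_combination -h1
      have hb : p.rep 1 = c * p'.rep 1 := by
        have h1 := congrFun hc 3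
        rw [hwcomp, hwcomp] at h1
        simp at h1
        linear_combination -h1
      have hpp : Projectivization.mk K p.rep p.rep_nonzero
          = Projectivization.mk K p'.rep p'.rep_nonzero := by
        rw [Projectivization.mk_eq_mk_iff']
        refine ⟨c, ?_⟩
        rw [hrep3 p hp2a, hrep3 p' hp2a', ha, hb]
        funext i
        fin_cases i <;> simp
      simpa [Projectivization.mk_rep] using hpp
    · -- surjective
      rintro P ⟨hP1, hP2⟩
      have hP1' : P.rep ∈ Submodule.span K {A0v τ q, A1v τ q} := hP1
      rw [Submodule.mem_span_pair] at hP1'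
      obtain ⟨a, b, hab⟩ := hP1'
      have hvne : (![a, b, 0] : Fin 3 → K) ≠ 0 := by
        intro h
        have ha : a = 0 := by simpa using congrFun h 0
        have hb : b = 0 := by simpa using congrFun h 1
        apply P.rep_nonzero
        rw [← hab, ha, hb, zero_smul, zero_smul, add_zero]
      have hφ : qeval M ![a, b, 0] = 0 := by
        have h1 : qeval Nt P.rep = 0 := hP2
        rw [← hab, hNt a b] at h1
        rcases mul_eq_zero.mp h1 with h | h
        · exact absurd h hcoef
        · exact h
      obtain ⟨c, hc0, hc⟩ := rep_mk_eq_smul ![a, b, 0] hvne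
      refine ⟨Projectivization.mk K ![a, b, 0] hvne, ⟨?_, ?_⟩, ?_⟩
      · show qeval M (Projectivization.mk K ![a, b, 0] hvne).rep = 0
        rw [hc, qeval_smul', hφ]
        ring
      · show (Projectivization.mk K ![a, b, 0] hvne).rep 2 = 0
        rw [hc]
        simp
      · -- G p = P
        have hrep0 : (Projectivization.mk K ![a, b, 0] hvne).rep 0 = c * a := by
          rw [hc]; simp
        have hrep1 : (Projectivization.mk K ![a, b, 0] hvne).rep 1 = c * b := by
          rw [hc]; simp
        have hsm : (Projectivization.mk K ![a, b, 0] hvne).rep 0 • A0v τ q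
            + (Projectivization.mk K ![a, b, 0] hvne).rep 1 • A1v τ q = c • P.rep := by
          rw [hrep0, hrep1, ← hab, smul_add, smul_smul, smul_smul]
        have hwne : (Projectivization.mk K ![a, b, 0] hvne).rep 0 • A0v τ q
            + (Projectivization.mk K ![a, b, 0] hvne).rep 1 • A1v τ q ≠ 0 := by
          rw [hsm]
          exact smul_ne_zero hc0 P.rep_nonzero
        rw [hG_def]
        simp only [dif_pos hwne]
        conv_rhs => rw [← Projectivization.mk_rep P]
        rw [Projectivization.mk_eq_mk_iff']
        exact ⟨c, hsm.symm⟩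
  rw [← hbij.image_eq, Set.ncard_image_of_injOn hbij.injOn]


end BaerConics
end
end
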